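/- arXiv:1301.1453 — 7 statements merged into one kernel-verified Lean document; each statement's English description precedes it below -/
import Mathlib

section
/- Let $G$ be a cyclic $p$-group and $H_i \le H_k \le G$ subgroups of orders $p^i$ and $p^k$. Then the fiber product of $G$-sets $G/H_i \times_{G/H_k} G/H_j$ (over the canonical projections) is isomorphic as a $G$-set to the disjoint union of $p^{k-\max(i,j)}$ copies of $G/H_{\min(i,j)}$. -/
/-! For `G = ℤ/p^rℤ` and its subgroup `H_k = p^{r-k}ℤ/p^rℤ` of order `p^k`, the
quotient `G`-set `G/H_k` is canonically `ZMod (p^(r-k))`, with `G` acting by translation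
through the reduction map `ZMod.cast : ZMod (p^r) → ZMod (p^(r-k))`, and the projection
`G/H_i → G/H_k` (for `i ≤ k`) is `ZMod.cast`. -/

/-- The fiber product `G/H_i ×_{G/H_k} G/H_j` of the canonical projections. -/
def FibSet (p r i j k : ℕ) : Set (ZMod (p^(r-i)) × ZMod (p^(r-j))) :=
  {z | (ZMod.cast z.1 : ZMod (p^(r-k))) = (ZMod.cast z.2 : ZMod (p^(r-k)))}


lemma cast_cast_eq {a b c : ℕ} (hab : a ∣ b) (hbc : b ∣ c) (g : ZMod c) :
    (ZMod.cast (ZMod.cast g : ZMod b) : ZMod a) = ZMod.cast g := by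
  have := RingHom.congr_fun (ZMod.castHom_comp hab hbc) g
  rw [RingHom.comp_apply, ZMod.castHom_apply, ZMod.castHom_apply, ZMod.castHom_apply] at this
  exact this

theorem helper (p r i j k : ℕ) (hp : p.Prime) (hij : i ≤ j) (hjk : j ≤ k) (hkr : k ≤ r) :
    ∃ e : FibSet p r i j k ≃ Fin (p ^ (k - j)) × ZMod (p ^ (r - i)),
      ∀ (g : ZMod (p^r)) (z : FibSet p r i j k)
        (hz : ((ZMod.cast g : ZMod (p^(r-i))) + z.val.1,
               (ZMod.cast g : ZMod (p^(r-j))) + z.val.2) ∈ FibSet p r i j k),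
        e ⟨((ZMod.cast g : ZMod (p^(r-i))) + z.val.1,
            (ZMod.cast g : ZMod (p^(r-j))) + z.val.2), hz⟩
          = ((e z).1, (ZMod.cast g : ZMod (p^(r-i))) + (e z).2) := by
  have hp0 : 0 < p := hp.pos
  haveI h1 : NeZero (p^(r-i)) := ⟨pow_ne_zero _ hp.ne_zero⟩
  haveI h2 : NeZero (p^(r-j)) := ⟨pow_ne_zero _ hp.ne_zero⟩
  haveI h3 : NeZero (p^(r-k)) := ⟨pow_ne_zero _ hp.ne_zero⟩
  have hd21 : p^(r-j) ∣ p^(r-i) := pow_dvd_pow p (Nat.sub_le_sub_left hij r)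
  have hd32 : p^(r-k) ∣ p^(r-j) := pow_dvd_pow p (Nat.sub_le_sub_left hjk r)
  have hd1r : p^(r-i) ∣ p^r := pow_dvd_pow p (Nat.sub_le r i)
  have hsplit : p^(r-j) = p^(r-k) * p^(k-j) := by
    rw [← pow_add]; congr 1; omega
  have key : ∀ z : FibSet p r i j k,
      p^(r-k) ∣ (z.val.2 - (ZMod.cast z.val.1 : ZMod (p^(r-j)))).val := by
    intro z
    rw [← ZMod.natCast_eq_zero_iff, ZMod.natCast_val,
      ZMod.cast_sub hd32, cast_cast_eq hd32 hd21]
    have hz := z.2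
    simp only [FibSet, Set.mem_setOf_eq] at hz
    rw [← hz, sub_self]
  have bound : ∀ z : FibSet p r i j k,
      (z.val.2 - (ZMod.cast z.val.1 : ZMod (p^(r-j)))).val / p^(r-k) < p^(k-j) := by
    intro z
    apply Nat.div_lt_of_lt_mul
    rw [← hsplit]
    exact ZMod.val_lt _
  set f : FibSet p r i j k → Fin (p ^ (k - j)) × ZMod (p ^ (r - i)) :=
    fun z => (⟨(z.val.2 - (ZMod.cast z.val.1 : ZMod (p^(r-j)))).val / p^(r-k), bound z⟩,
      z.val.1) with hf
  have hinj : Function.Injective f := by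
    rintro ⟨⟨a,b⟩,hab⟩ ⟨⟨a',b'⟩,ha'b'⟩ h
    simp only [hf, Prod.mk.injEq, Fin.mk.injEq] at h
    obtain ⟨h1, h2⟩ := h
    subst h2
    have e1 : (b - (ZMod.cast a : ZMod (p^(r-j)))).val
        = (b' - (ZMod.cast a : ZMod (p^(r-j)))).val := by
      obtain ⟨c1, hc1⟩ := key ⟨(a,b), hab⟩
      obtain ⟨c2, hc2⟩ := key ⟨(a,b'), ha'b'⟩
      simp only at hc1 hc2
      rw [hc1, hc2] at h1 ⊢
      rw [Nat.mul_div_cancel_left _ (pow_pos hp0 (r-k)),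
        Nat.mul_div_cancel_left _ (pow_pos hp0 (r-k))] at h1
      rw [h1]
    have hbb := ZMod.val_injective _ e1
    have : b = b' := by
      have := congrArg (· + (ZMod.cast a : ZMod (p^(r-j)))) hbb
      simpa using this
    simp [this]
  have hsurj : Function.Surjective f := by
    rintro ⟨t, a⟩
    refine ⟨⟨(a, (ZMod.cast a : ZMod (p^(r-j))) + ((p^(r-k) * t.val : ℕ) : ZMod (p^(r-j)))), ?_⟩, ?_⟩
    · simp only [FibSet, Set.mem_setOf_eq]
      rw [ZMod.cast_add hd32, ZMod.cast_natCast hd32, cast_cast_eq hd32 hd21,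
        Nat.cast_mul, ZMod.natCast_self, zero_mul, add_zero]
    · refine Prod.ext ?_ rfl
      apply Fin.ext
      show ((ZMod.cast a + ((p^(r-k) * t.val : ℕ) : ZMod (p^(r-j))))
          - (ZMod.cast a : ZMod (p^(r-j)))).val / p^(r-k) = (t : ℕ)
      have hval : (ZMod.cast a : ZMod (p^(r-j))) + ((p^(r-k) * t.val : ℕ) : ZMod (p^(r-j)))
          - ZMod.cast a = ((p^(r-k) * t.val : ℕ) : ZMod (p^(r-j))) := by ring
      rw [hval, ZMod.val_natCast_of_lt, Nat.mul_div_cancel_left _ (pow_pos hp0 (r-k))]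
      rw [hsplit]
      exact (Nat.mul_lt_mul_left (pow_pos hp0 _)).mpr t.isLt
  refine ⟨Equiv.ofBijective f ⟨hinj, hsurj⟩, ?_⟩
  intro g z hz
  show f _ = ((f z).1, _ + (f z).2)
  refine Prod.ext ?_ rfl
  apply Fin.ext
  show (((ZMod.cast g : ZMod (p^(r-j))) + z.val.2)
      - (ZMod.cast ((ZMod.cast g : ZMod (p^(r-i))) + z.val.1) : ZMod (p^(r-j)))).val / p^(r-k)
    = (z.val.2 - (ZMod.cast z.val.1 : ZMod (p^(r-j)))).val / p^(r-k)
  congr 2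
  rw [ZMod.cast_add hd21, cast_cast_eq hd21 hd1r]
  ring

def swapE (p r i j k : ℕ) : FibSet p r i j k ≃ FibSet p r j i k where
  toFun z := ⟨(z.val.2, z.val.1), z.2.symm⟩
  invFun z := ⟨(z.val.2, z.val.1), z.2.symm⟩
  left_inv z := rfl
  right_inv z := rfl

/-- The fiber product `G/H_i ×_{G/H_k} G/H_j` is isomorphic, as a `G`-set, to the
disjoint union of `p^{k - max(i,j)}` copies of `G/H_{min(i,j)}` (where `G` acts
diagonally by translation on the fiber product, trivially on the `Fin` factor and by
translation on `G/H_{min(i,j)}`). -/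
theorem fiber_product_of_projections (p r i j k : ℕ) (hp : p.Prime)
    (hik : i ≤ k) (hjk : j ≤ k) (hkr : k ≤ r) :
    ∃ e : FibSet p r i j k ≃ Fin (p ^ (k - max i j)) × ZMod (p ^ (r - min i j)),
      ∀ (g : ZMod (p^r)) (z : FibSet p r i j k)
        (hz : ((ZMod.cast g : ZMod (p^(r-i))) + z.val.1,
               (ZMod.cast g : ZMod (p^(r-j))) + z.val.2) ∈ FibSet p r i j k),
        e ⟨((ZMod.cast g : ZMod (p^(r-i))) + z.val.1,
            (ZMod.cast g : ZMod (p^(r-j))) + z.val.2), hz⟩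
          = ((e z).1, (ZMod.cast g : ZMod (p^(r - min i j))) + (e z).2) := by
  obtain h | h := le_total i j
  · have h1 : max i j = j := by omega
    have h2 : min i j = i := by omega
    rw [h1, h2]
    exact helper p r i j k hp h hjk hkr
  · have h1 : max i j = i := by omega
    have h2 : min i j = j := by omega
    rw [h1, h2]
    obtain ⟨e', he'⟩ := helper p r j i k hp h hik hkr
    refine ⟨(swapE p r i j k).trans e', ?_⟩
    intro g z hz
    exact he' g (swapE p r i j k z) _
end

section
/- The Burnside ring of a cyclic group of order $p^k$ is isomorphic as a ring to the quotient of the polynomial ring $\mathbb{Z}[X_0,\ldots,X_k]$ by the ideal generated by the relations $X_i X_j - p^{k-\max(i,j)} X_{\min(i,j)}$ for $0 \le i,j \le k$, together with $X_k - 1$. -/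
/-! We model the Burnside ring of the cyclic group `C_{p^ℓ}` via its (injective) mark
homomorphism: `Xe p ℓ i` is the vector of marks of the transitive `C_{p^ℓ}`-set
`C_{p^ℓ}/C_{p^i}`, namely `j ↦ #(fixed points of C_{p^j})`, stabilized for `j ≥ ℓ`.
The Burnside ring `BR p ℓ` is the subring of `ℕ → ℤ` generated by these mark vectors. -/

/-- Marks of the basis element `X_{ℓ,i} = [C_{p^ℓ}/C_{p^i}]`. -/
def Xe (p l i : ℕ) : ℕ → ℤ := fun j => if min j l ≤ i then (p : ℤ) ^ (l - i) else 0

/-- The Burnside ring of `C_{p^ℓ}`, realized as a subring of the ghost ring `ℕ → ℤ`. -/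
def BR (p l : ℕ) : Subring (ℕ → ℤ) := Subring.closure (Set.range (Xe p l))

/-- The basis element `X_{ℓ,i}` as an element of the Burnside ring. -/
def Xb (p l i : ℕ) : BR p l := ⟨Xe p l i, Subring.subset_closure ⟨i, rfl⟩⟩

/-- `F_{ℓ,i} = X_{ℓ,i} - p^{ℓ-i}` in the Burnside ring. -/
def Fb (p l i : ℕ) : BR p l := Xb p l i - (p : BR p l) ^ (l - i)

/-- `F_{ℓ,i} = X_{ℓ,i} - p^{ℓ-i}` as a mark vector. -/
def Fe (p l i : ℕ) : ℕ → ℤ := Xe p l i - (p : ℕ → ℤ) ^ (l - i)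

/-- Restriction `res^ℓ_k` to the subgroup `C_{p^k}` on mark vectors: truncation of marks. -/
def resA (k : ℕ) : (ℕ → ℤ) →+* (ℕ → ℤ) :=
  Pi.ringHom fun j => Pi.evalRingHom (fun _ => ℤ) (min j k)

/-- Additive transfer (induction) `ind^{m+1}_m` on mark vectors. -/
def indA (p m : ℕ) (a : ℕ → ℤ) : ℕ → ℤ := fun j => if j ≤ m then p * a j else 0

/-- Multiplicative transfer (norm) `jnd^{m+1}_m` on mark vectors. -/
def jndA (p m : ℕ) (a : ℕ → ℤ) : ℕ → ℤ := fun j => if j ≤ m then (a j) ^ p else a m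

/-- The ideal `J_{ℓ,k}(x) = (x, F_{ℓ,k}, …, F_{ℓ,ℓ-1})` of the Burnside ring. -/
def Jb (p l k : ℕ) (x : ℤ) : Ideal (BR p l) :=
  Ideal.span (insert (x : BR p l) (Fb p l '' Set.Ico k l))

/-! ### Auxiliary material for the presentation theorem -/

open MvPolynomial in
/-- The relation ideal of the presentation. -/
noncomputable def relI (p k : ℕ) : Ideal (MvPolynomial (Fin (k+1)) ℤ) :=
  Ideal.span
    ((Set.range fun ij : Fin (k+1) × Fin (k+1) =>
        X ij.1 * X ij.2 - C ((p : ℤ) ^ (k - max (ij.1 : ℕ) (ij.2 : ℕ))) * X (min ij.1 ij.2))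
      ∪ {X (Fin.last k) - 1})

lemma fin_val_min {n : ℕ} (a b : Fin n) : ((min a b : Fin n) : ℕ) = min (a : ℕ) (b : ℕ) := by
  rcases le_total a b with h | h
  · rw [min_eq_left h, min_eq_left (show (a : ℕ) ≤ (b : ℕ) from h)]
  · rw [min_eq_right h, min_eq_right (show (b : ℕ) ≤ (a : ℕ) from h)]

lemma Xe_of_le (p l i : ℕ) (h : l ≤ i) : Xe p l i = 1 := by
  funext j
  simp [Xe, min_le_of_right_le h, Nat.sub_eq_zero_of_le h]

lemma Xe_mul (p k : ℕ) {i j : ℕ} (hi : i ≤ k) (hj : j ≤ k) :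
    Xe p k i * Xe p k j = (p : ℕ → ℤ) ^ (k - max i j) * Xe p k (min i j) := by
  funext m
  simp only [Pi.mul_apply, Pi.pow_apply, Pi.natCast_apply, Xe]
  by_cases h1 : min m k ≤ i <;> by_cases h2 : min m k ≤ j
  · rw [if_pos h1, if_pos h2, if_pos (le_min h1 h2), ← pow_add, ← pow_add]
    congr 1
    omega
  all_goals simp [h1, h2, le_min_iff]

lemma Xb_last (p k : ℕ) : Xb p k k = 1 := by
  apply Subtype.ext
  exact Xe_of_le p k k le_rfl

lemma Xb_mul (p k : ℕ) {i j : ℕ} (hi : i ≤ k) (hj : j ≤ k) :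
    Xb p k i * Xb p k j = (((p : ℤ) ^ (k - max i j) : ℤ) : BR p k) * Xb p k (min i j) := by
  apply Subtype.ext
  show Xe p k i * Xe p k j = ((((p : ℤ) ^ (k - max i j) : ℤ) : BR p k) : ℕ → ℤ) * Xe p k (min i j)
  have : ((((p : ℤ) ^ (k - max i j) : ℤ) : BR p k) : ℕ → ℤ)
      = (((p : ℤ) ^ (k - max i j) : ℤ) : ℕ → ℤ) := by
    exact map_intCast (BR p k).subtype _
  rw [this, Xe_mul p k hi hj]
  congr 1


open MvPolynomial in
/-- The canonical map from the polynomial ring to the Burnside ring. -/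
noncomputable def phi (p k : ℕ) : MvPolynomial (Fin (k+1)) ℤ →+* BR p k :=
  eval₂Hom (Int.castRingHom (BR p k)) (fun i => Xb p k (i : ℕ))

open MvPolynomial in
lemma phi_X (p k : ℕ) (j : Fin (k+1)) : phi p k (X j) = Xb p k (j : ℕ) :=
  eval₂Hom_X' _ _ j

open MvPolynomial in
lemma phi_surjective (p k : ℕ) : Function.Surjective (phi p k) := by
  intro b
  have hle : BR p k ≤ ((BR p k).subtype.comp (phi p k)).range := by
    apply Subring.closure_le.mpr
    rintro _ ⟨i, rfl⟩
    rw [SetLike.mem_coe, RingHom.mem_range]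
    rcases le_or_gt i k with h | h
    · refine ⟨X ⟨i, by omega⟩, ?_⟩
      rw [RingHom.comp_apply, phi_X]
      rfl
    · refine ⟨1, ?_⟩
      rw [map_one, Xe_of_le p k i h.le]
      try rfl
  obtain ⟨f, hf⟩ := RingHom.mem_range.mp (hle b.2)
  exact ⟨f, Subtype.ext hf⟩

open MvPolynomial in
lemma phi_ker (p k : ℕ) : ∀ a ∈ relI p k, phi p k a = 0 := by
  have h : relI p k ≤ RingHom.ker (phi p k) := by
    rw [relI, Ideal.span_le]
    rintro f (⟨ij, rfl⟩ | rfl)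
    · have hi : (ij.1 : ℕ) ≤ k := by omega
      have hj : (ij.2 : ℕ) ≤ k := by omega
      rw [SetLike.mem_coe, RingHom.mem_ker, map_sub, map_mul, map_mul, phi_X, phi_X, phi_X,
        Xb_mul p k hi hj, fin_val_min, sub_eq_zero]
      congr 1
      exact ((eval₂Hom_C _ _ _).trans (eq_intCast (Int.castRingHom (BR p k)) _)).symm
    · rw [SetLike.mem_coe, RingHom.mem_ker, map_sub, map_one, phi_X, Fin.val_last, Xb_last,
        sub_self]
  exact fun a ha => h ha

open MvPolynomial in
lemma quot_span_top (p k : ℕ) :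
    Submodule.span ℤ (Set.range fun i : Fin (k+1) =>
      Ideal.Quotient.mk (relI p k) (X i)) = ⊤ := by
  rw [eq_top_iff]
  rintro q -
  obtain ⟨f, rfl⟩ := Ideal.Quotient.mk_surjective q
  have h1 : Ideal.Quotient.mk (relI p k) (X (Fin.last k)) = 1 := by
    have : Ideal.Quotient.mk (relI p k) (X (Fin.last k) - 1) = 0 :=
      Ideal.Quotient.eq_zero_iff_mem.mpr (Ideal.subset_span (Or.inr rfl))
    rw [map_sub, map_one, sub_eq_zero] at this
    exact this
  induction f using MvPolynomial.induction_on with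
  | C a =>
      have : Ideal.Quotient.mk (relI p k) (C a)
          = a • Ideal.Quotient.mk (relI p k) (X (Fin.last k)) := by
        rw [h1, zsmul_eq_mul, mul_one, eq_intCast (C : ℤ →+* MvPolynomial (Fin (k+1)) ℤ) a,
          map_intCast]
      rw [this]
      exact Submodule.smul_mem _ _ (Submodule.subset_span ⟨Fin.last k, rfl⟩)
  | add f g hf hg =>
      rw [map_add]
      exact Submodule.add_mem _ hf hg
  | mul_X f n hf =>
      rw [map_mul]
      set M := Submodule.span ℤ (Set.range fun i : Fin (k+1) =>
        Ideal.Quotient.mk (relI p k) (X i)) with hM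
      have key : ∀ z ∈ M, z * Ideal.Quotient.mk (relI p k) (X n) ∈ M := by
        intro z hz
        refine Submodule.span_induction ?_ ?_ ?_ ?_ hz
        · rintro _ ⟨j, rfl⟩
          have hrel : Ideal.Quotient.mk (relI p k) (X j) * Ideal.Quotient.mk (relI p k) (X n)
              = ((p : ℤ) ^ (k - max (j : ℕ) (n : ℕ))) •
                  Ideal.Quotient.mk (relI p k) (X (min j n)) := by
            rw [← map_mul]
            have : Ideal.Quotient.mk (relI p k)
                (X j * X n - C ((p : ℤ) ^ (k - max (j : ℕ) (n : ℕ))) * X (min j n)) = 0 :=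
              Ideal.Quotient.eq_zero_iff_mem.mpr (Ideal.subset_span (Or.inl ⟨(j, n), rfl⟩))
            rw [map_sub, sub_eq_zero] at this
            rw [this, map_mul, zsmul_eq_mul,
              eq_intCast (C : ℤ →+* MvPolynomial (Fin (k+1)) ℤ), map_intCast]
          rw [hrel]
          exact Submodule.smul_mem _ _ (Submodule.subset_span ⟨min j n, rfl⟩)
        · rw [zero_mul]; exact Submodule.zero_mem _
        · intro x y _ _ hx hy
          rw [add_mul]; exact Submodule.add_mem _ hx hy
        · intro a x _ hx
          rw [smul_mul_assoc]; exact Submodule.smul_mem _ _ hx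
      exact key _ hf

lemma Xe_linind (p k : ℕ) (hp : p ≠ 0) (c : Fin (k+1) → ℤ)
    (hc : ∑ i : Fin (k+1), c i • Xe p k (i : ℕ) = 0) : ∀ i, c i = 0 := by
  have key : ∀ i : Fin (k+1), (∀ t : Fin (k+1), (i : ℕ) < (t : ℕ) → c t = 0) → c i = 0 := by
    intro i h
    have h0 := congrFun hc (i : ℕ)
    rw [Finset.sum_apply] at h0
    simp only [Pi.smul_apply, smul_eq_mul, Pi.zero_apply] at h0
    have hsum : ∑ t : Fin (k+1), c t * Xe p k (t : ℕ) (i : ℕ)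
        = c i * Xe p k (i : ℕ) (i : ℕ) := by
      refine Finset.sum_eq_single i ?_ (by simp)
      intro t _ ht
      rcases lt_or_gt_of_ne (fun hv => ht (Fin.ext hv) : (t : ℕ) ≠ (i : ℕ)) with hlt | hgt
      · have : ¬ (min (i : ℕ) k ≤ (t : ℕ)) := by
          have := i.isLt; omega
        simp [Xe, this]
      · rw [h t hgt, zero_mul]
    rw [hsum] at h0
    have hXe : Xe p k (i : ℕ) (i : ℕ) = (p : ℤ) ^ (k - (i : ℕ)) := by
      have : min (i : ℕ) k ≤ (i : ℕ) := min_le_left _ _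
      simp [Xe, this]
    rw [hXe] at h0
    have hpow : ((p : ℤ)) ^ (k - (i : ℕ)) ≠ 0 := by
      apply pow_ne_zero
      exact_mod_cast hp
    exact (mul_eq_zero.mp h0).resolve_right hpow
  have main : ∀ n, ∀ i : Fin (k+1), k - (i : ℕ) ≤ n → c i = 0 := by
    intro n
    induction n with
    | zero =>
        intro i hi
        refine key i fun t ht => ?_
        have := t.isLt
        omega
    | succ n ih =>
        intro i hi
        refine key i fun t ht => ih t (by omega)
  intro i
  exact main k i (by omega)

set_option synthInstance.maxHeartbeats 1000000 in
set_option maxHeartbeats 1000000 in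
/-- The Burnside ring of `C_{p^k}` is isomorphic to
`ℤ[X_0,…,X_k] / (X_iX_j - p^{k-max(i,j)}X_{min(i,j)}  (0 ≤ i,j ≤ k),  X_k - 1)`. -/
theorem burnside_presentation (p k : ℕ) (hp : p.Prime) :
    Nonempty ((MvPolynomial (Fin (k+1)) ℤ ⧸ (Ideal.span
        ((Set.range fun ij : Fin (k+1) × Fin (k+1) =>
            MvPolynomial.X ij.1 * MvPolynomial.X ij.2
              - MvPolynomial.C ((p : ℤ) ^ (k - max (ij.1 : ℕ) (ij.2 : ℕ)))
                * MvPolynomial.X (min ij.1 ij.2))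
          ∪ {MvPolynomial.X (Fin.last k) - 1}))) ≃+* BR p k) := by
  show Nonempty ((MvPolynomial (Fin (k+1)) ℤ ⧸ relI p k) ≃+* BR p k)
  let φ : (MvPolynomial (Fin (k+1)) ℤ ⧸ relI p k) →+* BR p k :=
    Ideal.Quotient.lift (relI p k) (phi p k) (phi_ker p k)
  have hφmk : ∀ f, φ (Ideal.Quotient.mk (relI p k) f) = phi p k f := fun f =>
    Ideal.Quotient.lift_mk (relI p k) _ _
  have hsurj : Function.Surjective φ := by
    intro b
    obtain ⟨f, hf⟩ := phi_surjective p k b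
    exact ⟨Ideal.Quotient.mk _ f, by rw [hφmk, hf]⟩
  have hinj : Function.Injective φ := by
    rw [injective_iff_map_eq_zero]
    intro q hq
    have hq_mem : q ∈ Submodule.span ℤ (Set.range fun i : Fin (k+1) =>
        Ideal.Quotient.mk (relI p k) (MvPolynomial.X i)) := by
      rw [quot_span_top p k]; trivial
    obtain ⟨c, rfl⟩ := (Submodule.mem_span_range_iff_exists_fun ℤ).mp hq_mem
    have himg : φ (∑ i : Fin (k+1), c i • Ideal.Quotient.mk (relI p k) (MvPolynomial.X i))
        = ∑ i : Fin (k+1), c i • Xb p k (i : ℕ) := by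
      rw [map_sum]
      refine Finset.sum_congr rfl fun i _ => ?_
      rw [zsmul_eq_mul, map_mul, map_intCast, hφmk, phi_X, ← zsmul_eq_mul]
    rw [himg] at hq
    have hcoe : ((∑ i : Fin (k+1), c i • Xb p k (i : ℕ) : BR p k) : ℕ → ℤ)
        = ∑ i : Fin (k+1), c i • Xe p k (i : ℕ) := by
      show (BR p k).subtype (∑ i : Fin (k+1), c i • Xb p k (i : ℕ)) = _
      rw [map_sum]
      refine Finset.sum_congr rfl fun i _ => ?_
      exact AddSubgroupClass.coe_zsmul _ _
    have h0 : ∑ i : Fin (k+1), c i • Xe p k (i : ℕ) = 0 := by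
      rw [← hcoe, hq]
      try rfl
    have hc0 := Xe_linind p k hp.ne_zero c h0
    simp [hc0]
  exact ⟨RingEquiv.ofBijective φ ⟨hinj, hsurj⟩⟩
end

section
/- Let $p$ be a prime, $1 \le \ell$, $0 \le k \le \ell - 1$, and $x \in \mathbb{Z}$. In the Burnside ring $R_\ell$ of $C_{p^\ell}$, the ideal $J_{\ell,k}(x) = (x, F_{\ell,k}, F_{\ell,k+1}, \ldots, F_{\ell,\ell-1})$ equals the set of elements $m_\ell + \sum_{i=0}^{\ell-1} m_i F_{\ell,i}$ (with $m_i \in \mathbb{Z}$) such that $x \mid m_\ell$ and $x \mid m_i$ for all $0 \le i \le k-1$. -/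
def Qprop (p l : ℕ) (a : ℕ → ℤ) : Prop :=
  (∀ j, a j = a (min j l)) ∧ ∀ i, (p:ℤ)^(l-i) ∣ a i - a (i+1)

lemma Q_of_mem {p l : ℕ} {a : ℕ → ℤ} (ha : a ∈ BR p l) : Qprop p l a := by
  induction ha using Subring.closure_induction with
  | mem b hb =>
    obtain ⟨i, rfl⟩ := hb
    constructor
    · intro j
      simp [Xe, min_assoc]
    · intro j
      by_cases c1 : min j l ≤ i <;> by_cases c2 : min (j+1) l ≤ i
      · simp [Xe, c1, c2]
      · have hij : i = j := by omega
        subst hij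
        simp [Xe, c1, c2]
      · omega
      · simp [Xe, c1, c2]
  | zero => exact ⟨fun j => rfl, fun i => dvd_zero _⟩
  | one => exact ⟨fun j => rfl, by simp [Pi.one_apply]⟩
  | add a b _ _ pa pb =>
    refine ⟨fun j => by simp [Pi.add_apply, pa.1 j, pb.1 j], fun i => ?_⟩
    convert dvd_add (pa.2 i) (pb.2 i) using 1
    · rfl
    simp only [Pi.add_apply]; ring
  | neg a _ pa =>
    refine ⟨fun j => by simp [Pi.neg_apply, pa.1 j], fun i => ?_⟩
    convert (pa.2 i).neg_right using 1
    · rfl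
    simp only [Pi.neg_apply]; ring
  | mul a b _ _ pa pb =>
    refine ⟨fun j => by simp [Pi.mul_apply, pa.1 j, pb.1 j], fun i => ?_⟩
    have h : (a*b) i - (a*b) (i+1)
        = a i * (b i - b (i+1)) + b (i+1) * (a i - a (i+1)) := by
      simp only [Pi.mul_apply]; ring
    rw [h]
    exact dvd_add ((pb.2 i).mul_left _) ((pa.2 i).mul_left _)

lemma Fb_val (p l i : ℕ) : ((Fb p l i : BR p l) : ℕ → ℤ) = Fe p l i := by
  simp [Fb, Fe, Xb]

lemma repr_eq {p l : ℕ} {a : ℕ → ℤ} (hQ : Qprop p l a) (m : ℕ → ℤ)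
    (hm : ∀ i < l, a i - a (i+1) = m i * (p:ℤ)^(l-i)) :
    a = (fun _ => a 0) + ∑ i ∈ Finset.range l, m i • Fe p l i := by
  funext j
  have htl : min j l ≤ l := min_le_right _ _
  have hterm : ∀ i ∈ Finset.range l, (m i • Fe p l i) j
      = if i < min j l then a (i+1) - a i else 0 := by
    intro i hi
    rw [Finset.mem_range] at hi
    by_cases h : min j l ≤ i
    · simp [Fe, Xe, h, Nat.not_lt.mpr h]
    · have hi2 : i < min j l := Nat.not_le.mp h
      simp only [Fe, Xe, Pi.smul_apply, Pi.sub_apply, Pi.pow_apply, Pi.natCast_apply,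
        smul_eq_mul, if_neg h, hi2, if_pos]
      rw [zero_sub, mul_neg, ← hm i hi]
      ring
  rw [Pi.add_apply, Finset.sum_apply, Finset.sum_congr rfl hterm]
  rw [← Finset.sum_subset (Finset.range_subset_range.mpr htl)
      (fun i _ hi => by rw [Finset.mem_range, Nat.not_lt] at hi; exact if_neg (by omega))]
  have : ∑ i ∈ Finset.range (min j l), (if i < min j l then a (i+1) - a i else 0)
      = ∑ i ∈ Finset.range (min j l), (a (i+1) - a i) :=
    Finset.sum_congr rfl fun i hi => if_pos (Finset.mem_range.mp hi)
  rw [this, Finset.sum_range_sub]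
  rw [hQ.1 j]; ring

/-- Explicit description of the ideal `J_{ℓ,k}(x) = (x, F_{ℓ,k}, …, F_{ℓ,ℓ-1})` of `R_ℓ`:
it consists of the elements `m_ℓ + ∑_{i<ℓ} m_i F_{ℓ,i}` with `x ∣ m_ℓ` and
`x ∣ m_i` for all `i < k`. -/
theorem J_mem (p l k : ℕ) (hp : p.Prime) (hl : 1 ≤ l) (hk : k ≤ l - 1) (x : ℤ) :
    ∀ a : BR p l, a ∈ Jb p l k x ↔
      ∃ m : ℕ → ℤ, a = (m l : BR p l) + ∑ i ∈ Finset.range l, m i • Fb p l i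
        ∧ x ∣ m l ∧ ∀ i < k, x ∣ m i := by
  have hkl : k < l := by omega
  have hpe : ∀ e : ℕ, ((p:ℤ)^e) ≠ 0 := fun e =>
    pow_ne_zero _ (by exact_mod_cast hp.ne_zero)
  intro a
  constructor
  · intro ha
    have key : x ∣ (a : ℕ → ℤ) 0 ∧
        ∀ i < k, x * (p:ℤ)^(l-i) ∣ ((a:ℕ→ℤ) i - (a:ℕ→ℤ) (i+1)) := by
      induction ha using Submodule.span_induction with
      | mem b hb =>
        rcases hb with rfl | ⟨i, hi, rfl⟩
        · constructor
          · show x ∣ ((x : BR p l) : ℕ → ℤ) 0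
            simp
          · intro i _
            show x * (p:ℤ)^(l-i) ∣ ((x : BR p l) : ℕ → ℤ) i - ((x : BR p l) : ℕ → ℤ) (i+1)
            simp
        · rw [Set.mem_Ico] at hi
          rw [Fb_val]
          constructor
          · simp [Fe, Xe]
          · intro j hj
            have h1 : min j l ≤ i := le_trans (min_le_left _ _) (by omega)
            have h2 : min (j+1) l ≤ i := le_trans (min_le_left _ _) (by omega)
            simp [Fe, Xe, h1, h2]
      | zero => simp
      | add b c _ _ pb pc =>
        refine ⟨by simpa using dvd_add pb.1 pc.1, fun i hi => ?_⟩
        have := dvd_add (pb.2 i hi) (pc.2 i hi)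
        convert this using 1
        · rfl
        push_cast
        simp only [Pi.add_apply]
        ring
      | smul r b _ pb =>
        have hQb := Q_of_mem b.2
        have hQr := Q_of_mem r.2
        have hbj : ∀ j ≤ k, x ∣ (b : ℕ → ℤ) j := by
          intro j hj
          induction j with
          | zero => exact pb.1
          | succ n ih =>
            have h1 : x ∣ (b:ℕ→ℤ) n - (b:ℕ→ℤ) (n+1) :=
              (dvd_mul_right x _).trans (pb.2 n (by omega))
            have h2 := ih (by omega)
            have : (b:ℕ→ℤ) (n+1) = (b:ℕ→ℤ) n - ((b:ℕ→ℤ) n - (b:ℕ→ℤ) (n+1)) := by ring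
            rw [this]
            exact dvd_sub h2 h1
        constructor
        · show x ∣ ((r * b : BR p l) : ℕ → ℤ) 0
          push_cast
          exact (pb.1.mul_left _)
        · intro i hi
          show x * (p:ℤ)^(l-i) ∣ ((r*b : BR p l) : ℕ → ℤ) i - ((r*b:BR p l) : ℕ→ℤ) (i+1)
          push_cast
          have heq : (r:ℕ→ℤ) i * (b:ℕ→ℤ) i - (r:ℕ→ℤ) (i+1) * (b:ℕ→ℤ) (i+1)
              = (r:ℕ→ℤ) i * ((b:ℕ→ℤ) i - (b:ℕ→ℤ) (i+1))
                + (b:ℕ→ℤ) (i+1) * ((r:ℕ→ℤ) i - (r:ℕ→ℤ) (i+1)) := by ring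
          simp only [Pi.mul_apply]
          rw [heq]
          refine dvd_add ((pb.2 i hi).mul_left _) ?_
          exact mul_dvd_mul (hbj (i+1) (by omega)) (hQr.2 i)
    -- construct m
    have hQa := Q_of_mem a.2
    set A : ℕ → ℤ := (a : ℕ → ℤ) with hA
    obtain ⟨m, hmdef⟩ : ∃ m : ℕ → ℤ,
        m = fun i => if i = l then A 0 else (A i - A (i+1)) / (p:ℤ)^(l-i) := ⟨_, rfl⟩
    have hml : m l = A 0 := by rw [hmdef]; simp
    have hmlt : ∀ i < l, m i = (A i - A (i+1)) / (p:ℤ)^(l-i) := by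
      intro i hi; rw [hmdef]; simp only [if_neg (Nat.ne_of_lt hi)]
    refine ⟨m, ?_, ?_, ?_⟩
    · have hm : ∀ i < l, A i - A (i+1) = m i * (p:ℤ)^(l-i) := by
        intro i hi
        rw [hmlt i hi, Int.ediv_mul_cancel (hQa.2 i)]
      apply Subtype.ext
      have hrep := repr_eq hQa m hm
      have hcoe : (((m l : BR p l) + ∑ i ∈ Finset.range l, m i • Fb p l i : BR p l) : ℕ → ℤ)
          = (fun _ => m l) + ∑ i ∈ Finset.range l, m i • Fe p l i := by
        push_cast [Fb_val]
        rfl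
      rw [hcoe, hml]
      exact hrep
    · rw [hml]; exact key.1
    · intro i hi
      rw [hmlt i (lt_trans hi hkl)]
      obtain ⟨c, hc⟩ := key.2 i hi
      rw [hc, mul_right_comm, Int.mul_ediv_cancel _ (hpe _)]
      exact Dvd.intro c rfl
  · rintro ⟨m, rfl, hml, hmi⟩
    have hx : (x : BR p l) ∈ Jb p l k x :=
      Ideal.subset_span (Set.mem_insert _ _)
    refine Ideal.add_mem _ ?_ (Ideal.sum_mem _ fun i hi => ?_)
    · obtain ⟨c, hc⟩ := hml
      rw [hc]
      push_cast
      exact Ideal.mul_mem_right _ _ hx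
    · rw [Finset.mem_range] at hi
      rw [zsmul_eq_mul]
      by_cases h : i < k
      · obtain ⟨c, hc⟩ := hmi i h
        rw [hc]
        push_cast
        rw [mul_assoc]
        exact Ideal.mul_mem_right _ _ hx
      · exact Ideal.mul_mem_left _ _
          (Ideal.subset_span (Set.mem_insert_of_mem _ ⟨i, ⟨by omega, hi⟩, rfl⟩))
end

section
/- Let $p$ be a prime, $\ell \ge 1$, $e \ge 0$. In the Burnside ring $R_\ell$ of $C_{p^\ell}$, there is no ideal strictly between $J_{\ell,0}(p^{e+2}) = (p^{e+2}, F_{\ell,0}, \ldots, F_{\ell,\ell-1})$ and $J_{\ell,0}(p^{e+1}) = (p^{e+1}, F_{\ell,0}, \ldots, F_{\ell,\ell-1})$. -/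
/-- Evaluation of marks at the full group orbit-count coordinate `j = 0`. -/
def phiB (p l : ℕ) : BR p l →+* ℤ :=
  (Pi.evalRingHom (fun _ => ℤ) 0).comp (BR p l).subtype

lemma phiB_Xb (p l i : ℕ) : phiB p l (Xb p l i) = (p:ℤ) ^ (l - i) := by
  simp [phiB, Xb, Xe]

lemma phiB_Fb (p l i : ℕ) : phiB p l (Fb p l i) = 0 := by
  simp [Fb, map_sub, map_pow, map_natCast, phiB_Xb]

lemma sub_phi_mem (p l : ℕ) (r : BR p l) :
    r - ((phiB p l r : ℤ) : BR p l) ∈ Ideal.span (Fb p l '' Set.Ico 0 l) := by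
  obtain ⟨a, ha⟩ := r
  induction ha using Subring.closure_induction with
  | mem x hx =>
      obtain ⟨i, rfl⟩ := hx
      show Xb p l i - ((phiB p l (Xb p l i) : ℤ) : BR p l) ∈ _
      rw [phiB_Xb]
      have hcast : Xb p l i - (((p:ℤ)^(l-i) : ℤ) : BR p l) = Fb p l i := by
        have hc2 : (((p:ℤ)^(l-i) : ℤ) : BR p l) = (p : BR p l)^(l-i) := by
          push_cast; ring
        rw [Fb, hc2]
      rw [hcast]
      by_cases hi : i < l
      · exact Ideal.subset_span ⟨i, ⟨Nat.zero_le i, hi⟩, rfl⟩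
      · have h0 : l - i = 0 := Nat.sub_eq_zero_of_le (le_of_not_gt hi)
        have hX : Xb p l i = 1 := by
          apply Subtype.ext
          funext j
          simp [Xb, Xe, h0, min_le_of_right_le (le_of_not_gt hi)]
        have : Fb p l i = 0 := by rw [Fb, hX, h0, pow_zero, sub_self]
        rw [this]; exact Ideal.zero_mem _
  | one =>
      show (1 : BR p l) - ((phiB p l 1 : ℤ) : BR p l) ∈ _
      simp
  | add x y hx hy hax hay =>
      show ((⟨x, hx⟩ : BR p l) + ⟨y, hy⟩) -
        ((phiB p l ((⟨x, hx⟩ : BR p l) + ⟨y, hy⟩) : ℤ) : BR p l) ∈ _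
      have : ((⟨x, hx⟩ : BR p l) + ⟨y, hy⟩) -
          ((phiB p l ((⟨x, hx⟩ : BR p l) + ⟨y, hy⟩) : ℤ) : BR p l) =
          ((⟨x, hx⟩ : BR p l) - ((phiB p l ⟨x, hx⟩ : ℤ) : BR p l)) +
          ((⟨y, hy⟩ : BR p l) - ((phiB p l ⟨y, hy⟩ : ℤ) : BR p l)) := by
        rw [map_add]; push_cast; ring
      rw [this]; exact Ideal.add_mem _ hax hay
  | mul x y hx hy hax hay =>
      show ((⟨x, hx⟩ : BR p l) * ⟨y, hy⟩) -
        ((phiB p l ((⟨x, hx⟩ : BR p l) * ⟨y, hy⟩) : ℤ) : BR p l) ∈ _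
      have : ((⟨x, hx⟩ : BR p l) * ⟨y, hy⟩) -
          ((phiB p l ((⟨x, hx⟩ : BR p l) * ⟨y, hy⟩) : ℤ) : BR p l) =
          (⟨x, hx⟩ : BR p l) * ((⟨y, hy⟩ : BR p l) - ((phiB p l ⟨y, hy⟩ : ℤ) : BR p l)) +
          ((phiB p l ⟨y, hy⟩ : ℤ) : BR p l) *
            ((⟨x, hx⟩ : BR p l) - ((phiB p l ⟨x, hx⟩ : ℤ) : BR p l)) := by
        rw [map_mul]; push_cast; ring
      rw [this]
      exact Ideal.add_mem _ (Ideal.mul_mem_left _ _ hay) (Ideal.mul_mem_left _ _ hax)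
  | neg x hx hax =>
      show (-(⟨x, hx⟩ : BR p l)) - ((phiB p l (-(⟨x, hx⟩ : BR p l)) : ℤ) : BR p l) ∈ _
      have : (-(⟨x, hx⟩ : BR p l)) - ((phiB p l (-(⟨x, hx⟩ : BR p l)) : ℤ) : BR p l) =
          -((⟨x, hx⟩ : BR p l) - ((phiB p l ⟨x, hx⟩ : ℤ) : BR p l)) := by
        rw [map_neg]; push_cast; ring
      rw [this]; exact neg_mem hax
  | zero =>
      show (0 : BR p l) - ((phiB p l 0 : ℤ) : BR p l) ∈ _
      simp

lemma phi_dvd_of_mem {p l : ℕ} {x : ℤ} {r : BR p l} (hr : r ∈ Jb p l 0 x) :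
    x ∣ phiB p l r := by
  have hle : Jb p l 0 x ≤ Ideal.comap (phiB p l) (Ideal.span {x}) := by
    rw [Jb, Ideal.span_le]
    rintro g (rfl | ⟨i, hi, rfl⟩) <;>
      simp [Ideal.mem_comap, Ideal.mem_span_singleton, phiB_Fb]
  simpa [Ideal.mem_comap, Ideal.mem_span_singleton] using hle hr

lemma sub_phi_mem_Jb (p l : ℕ) (x : ℤ) (r : BR p l) :
    r - ((phiB p l r : ℤ) : BR p l) ∈ Jb p l 0 x :=
  Ideal.span_mono (Set.subset_insert _ _) (sub_phi_mem p l r)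

lemma mem_of_phi_dvd {p l : ℕ} {x : ℤ} {r : BR p l} (h : x ∣ phiB p l r) :
    r ∈ Jb p l 0 x := by
  obtain ⟨m, hm⟩ := h
  have h2 : ((phiB p l r : ℤ) : BR p l) ∈ Jb p l 0 x := by
    rw [hm]; push_cast
    exact Ideal.mul_mem_right _ _ (Ideal.subset_span (Set.mem_insert _ _))
  have := Ideal.add_mem _ (sub_phi_mem_Jb p l x r) h2
  simpa using this


/-- There is no ideal of `R_ℓ` strictly between `J_{ℓ,0}(p^{e+2})` and `J_{ℓ,0}(p^{e+1})`. -/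
theorem no_ideal_between_Jp (p l e : ℕ) (hp : p.Prime) (hl : 1 ≤ l) (I : Ideal (BR p l))
    (h1 : Jb p l 0 ((p : ℤ) ^ (e+2)) ≤ I) (h2 : I ≤ Jb p l 0 ((p : ℤ) ^ (e+1))) :
    I = Jb p l 0 ((p : ℤ) ^ (e+2)) ∨ I = Jb p l 0 ((p : ℤ) ^ (e+1)) := by
  by_cases hI : I = Jb p l 0 ((p : ℤ) ^ (e+2))
  · exact Or.inl hI
  right
  obtain ⟨r, hrI, hr2⟩ := SetLike.exists_of_lt (h1.lt_of_ne (Ne.symm hI))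
  obtain ⟨n, hn⟩ := phi_dvd_of_mem (h2 hrI)
  have hpn : ¬ (p:ℤ) ∣ n := by
    rintro ⟨m, rfl⟩
    exact hr2 (mem_of_phi_dvd ⟨m, by rw [hn]; ring⟩)
  obtain ⟨u, v, huv⟩ := (Nat.prime_iff_prime_int.mp hp).coprime_iff_not_dvd.mpr hpn
  have e1 : (p:ℤ)^(e+1) = u*(p:ℤ)^(e+2) + v*(phiB p l r) := by
    rw [hn]; linear_combination (-(p:ℤ)^(e+1)) * huv
  have hφr : ((phiB p l r : ℤ) : BR p l) ∈ I := by
    have := I.sub_mem hrI (h1 (sub_phi_mem_Jb p l ((p:ℤ)^(e+2)) r))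
    simpa using this
  have hp2 : (((p:ℤ)^(e+2) : ℤ) : BR p l) ∈ I :=
    h1 (Ideal.subset_span (Set.mem_insert _ _))
  have key : (((p:ℤ)^(e+1) : ℤ) : BR p l) ∈ I := by
    have ecast : (((p:ℤ)^(e+1) : ℤ) : BR p l) =
        (u : BR p l) * (((p:ℤ)^(e+2) : ℤ) : BR p l) +
        (v : BR p l) * ((phiB p l r : ℤ) : BR p l) := by
      rw [e1]; push_cast; ring
    rw [ecast]
    exact I.add_mem (I.mul_mem_left _ hp2) (I.mul_mem_left _ hφr)
  refine le_antisymm h2 ?_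
  rw [Jb, Ideal.span_le]
  rintro g (rfl | ⟨i, hi, rfl⟩)
  · exact key
  · exact h1 (Ideal.subset_span (Set.mem_insert_of_mem _ ⟨i, hi, rfl⟩))
end

section
/- Let $p$ be a prime, $\ell \ge 1$, $e \ge 0$, and $n = p^{e+1}$. The preimage under the restriction ring homomorphism $\mathrm{res}^\ell_{\ell-1} : R_\ell \to R_{\ell-1}$ of the ideal $J_{\ell-1,0}(p^{e+1}) \subseteq R_{\ell-1}$ equals $J_{\ell,0}(p^{e+1}) \subseteq R_\ell$. -/
/-- Evaluation of marks at 0 (the augmentation). -/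
def epsB (p l : ℕ) : BR p l →+* ℤ :=
  (Pi.evalRingHom (fun _ => ℤ) 0).comp (BR p l).subtype

lemma epsB_apply (p l : ℕ) (a : BR p l) : epsB p l a = (a : ℕ → ℤ) 0 := rfl

lemma Fb_eq_zero_of_le (p l i : ℕ) (h : l ≤ i) : Fb p l i = 0 := by
  have h1 : Xb p l i = 1 := by
    apply Subtype.ext
    funext j
    simp only [Xb, Xe]
    rw [if_pos (le_trans (min_le_right j l) h)]
    simp [Nat.sub_eq_zero_of_le h]
  simp [Fb, h1, Nat.sub_eq_zero_of_le h]

lemma sub_cast_mem (p l : ℕ) (a : BR p l) :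
    a - (((a : ℕ → ℤ) 0 : ℤ) : BR p l) ∈ Ideal.span (Fb p l '' Set.Ico 0 l) := by
  obtain ⟨f, hf⟩ := a
  induction hf using Subring.closure_induction with
  | mem x hx =>
      obtain ⟨i, rfl⟩ := hx
      show Xb p l i - ((Xe p l i 0 : ℤ) : BR p l) ∈ _
      have key : (((Xe p l i 0 : ℤ)) : BR p l) = (p : BR p l) ^ (l - i) := by
        apply Subtype.ext
        push_cast
        funext j
        simp [Xe]
      rw [key]
      by_cases hil : i < l
      · exact Ideal.subset_span ⟨i, ⟨Set.mem_Ico.mpr ⟨Nat.zero_le _, hil⟩, rfl⟩⟩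
      · rw [show Xb p l i - (p : BR p l) ^ (l - i) = Fb p l i from rfl,
          Fb_eq_zero_of_le p l i (le_of_not_gt hil)]
        exact Ideal.zero_mem _
  | zero =>
      convert Ideal.zero_mem (Ideal.span (Fb p l '' Set.Ico 0 l)) using 1
      ext j; simp
  | one =>
      convert Ideal.zero_mem (Ideal.span (Fb p l '' Set.Ico 0 l)) using 1
      ext j; simp
  | add x y hx hy ihx ihy =>
      have : (⟨x + y, add_mem hx hy⟩ : BR p l) - (((x + y) 0 : ℤ) : BR p l)
          = ((⟨x, hx⟩ : BR p l) - ((x 0 : ℤ) : BR p l))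
            + ((⟨y, hy⟩ : BR p l) - ((y 0 : ℤ) : BR p l)) := by
        apply Subtype.ext; push_cast; funext j; simp; ring
      rw [this]; exact add_mem ihx ihy
  | neg x hx ihx =>
      have : (⟨-x, neg_mem hx⟩ : BR p l) - (((-x) 0 : ℤ) : BR p l)
          = -((⟨x, hx⟩ : BR p l) - ((x 0 : ℤ) : BR p l)) := by
        apply Subtype.ext; push_cast; funext j; simp; ring
      rw [this]; exact neg_mem ihx
  | mul x y hx hy ihx ihy =>
      have : (⟨x * y, mul_mem hx hy⟩ : BR p l) - (((x * y) 0 : ℤ) : BR p l)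
          = (⟨x, hx⟩ : BR p l) * ((⟨y, hy⟩ : BR p l) - ((y 0 : ℤ) : BR p l))
            + ((⟨x, hx⟩ : BR p l) - ((x 0 : ℤ) : BR p l)) * ((y 0 : ℤ) : BR p l) := by
        apply Subtype.ext; push_cast; funext j; simp; ring
      rw [this]
      exact add_mem (Ideal.mul_mem_left _ _ ihy) (Ideal.mul_mem_right _ _ ihx)

lemma mem_Jb_iff (p l : ℕ) (x : ℤ) (a : BR p l) :
    a ∈ Jb p l 0 x ↔ x ∣ (a : ℕ → ℤ) 0 := by
  constructor
  · intro ha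
    have hmap : epsB p l a ∈ Ideal.map (epsB p l) (Jb p l 0 x) :=
      Ideal.mem_map_of_mem _ ha
    rw [Jb, Ideal.map_span] at hmap
    have hle : Ideal.span ((epsB p l) '' insert ((x : BR p l)) (Fb p l '' Set.Ico 0 l))
        ≤ Ideal.span {x} := by
      rw [Ideal.span_le]
      rintro y ⟨z, hz, rfl⟩
      rcases hz with rfl | ⟨i, hi, rfl⟩
      · have : epsB p l ((x : BR p l)) = x := map_intCast _ _
        rw [SetLike.mem_coe, this]
        exact Ideal.subset_span rfl
      · have h0 : epsB p l (Fb p l i) = 0 := by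
          rw [Fb, map_sub, map_pow, map_natCast, epsB_apply]
          simp [Xb, Xe]
        rw [SetLike.mem_coe, h0]
        exact Ideal.zero_mem _
    rw [← Ideal.mem_span_singleton]
    exact hle hmap
  · intro ⟨c, hc⟩
    have h1 : a - (((a : ℕ → ℤ) 0 : ℤ) : BR p l) ∈ Jb p l 0 x := by
      apply Ideal.span_mono (Set.subset_insert _ _)
      exact sub_cast_mem p l a
    have h2 : (((a : ℕ → ℤ) 0 : ℤ) : BR p l) ∈ Jb p l 0 x := by
      rw [hc]
      push_cast
      exact Ideal.mul_mem_right _ _ (Ideal.subset_span (Set.mem_insert _ _))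
    have := add_mem h1 h2
    simpa using this

lemma resA_apply (k : ℕ) (f : ℕ → ℤ) (j : ℕ) : resA k f j = f (min j k) := rfl

lemma resA_Xe_lt (p l i : ℕ) (hl : 1 ≤ l) (hil : i < l) :
    resA (l-1) (Xe p l i) = (p : ℕ → ℤ) * Xe p (l-1) i := by
  funext j
  rw [resA_apply]
  simp only [Xe, Pi.mul_apply, Pi.natCast_apply]
  rw [show min (min j (l-1)) l = min j (l-1) by omega]
  by_cases h : min j (l-1) ≤ i
  · rw [if_pos h, if_pos h, ← pow_succ']
    congr 1
    omega
  · rw [if_neg h, if_neg h, mul_zero]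

lemma resA_Xe_ge (p l i : ℕ) (hil : l ≤ i) :
    resA (l-1) (Xe p l i) = 1 := by
  funext j
  rw [resA_apply]
  simp only [Xe]
  rw [if_pos (by omega), Nat.sub_eq_zero_of_le hil, pow_zero]
  rfl

lemma resA_mem (p l : ℕ) (hl : 1 ≤ l) (f : ℕ → ℤ) (hf : f ∈ BR p l) :
    resA (l-1) f ∈ BR p (l-1) := by
  induction hf using Subring.closure_induction with
  | mem x hx =>
      obtain ⟨i, rfl⟩ := hx
      by_cases hil : i < l
      · rw [resA_Xe_lt p l i hl hil]
        exact mul_mem (natCast_mem _ p) (Subring.subset_closure ⟨i, rfl⟩)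
      · rw [resA_Xe_ge p l i (le_of_not_gt hil)]
        exact one_mem _
  | zero => rw [map_zero]; exact zero_mem _
  | one => rw [map_one]; exact one_mem _
  | add x y hx hy ihx ihy => rw [map_add]; exact add_mem ihx ihy
  | neg x hx ihx => rw [map_neg]; exact neg_mem ihx
  | mul x y hx hy ihx ihy => rw [map_mul]; exact mul_mem ihx ihy

/-- The preimage of `J_{ℓ-1,0}(p^{e+1}) ⊆ R_{ℓ-1}` under the restriction
`res^ℓ_{ℓ-1} : R_ℓ → R_{ℓ-1}` equals `J_{ℓ,0}(p^{e+1}) ⊆ R_ℓ`.  (The element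
`b ∈ R_{ℓ-1}` below is the restriction of `a`, viewed inside the ghost ring.) -/
theorem res_preimage_Jp (p l e : ℕ) (hp : p.Prime) (hl : 1 ≤ l) :
    ∀ a : BR p l,
      (∃ b : BR p (l-1), (b : ℕ → ℤ) = resA (l-1) (a : ℕ → ℤ)
          ∧ b ∈ Jb p (l-1) 0 ((p : ℤ) ^ (e+1)))
      ↔ a ∈ Jb p l 0 ((p : ℤ) ^ (e+1)) := by
  intro a
  have hres0 : resA (l-1) (a : ℕ → ℤ) 0 = (a : ℕ → ℤ) 0 := by
    rw [resA_apply, Nat.zero_min]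
  constructor
  · rintro ⟨b, hb, hbJ⟩
    have hdvd := (mem_Jb_iff p (l-1) _ b).mp hbJ
    rw [hb, hres0] at hdvd
    exact (mem_Jb_iff p l _ a).mpr hdvd
  · intro ha
    have hdvd := (mem_Jb_iff p l _ a).mp ha
    refine ⟨⟨resA (l-1) (a : ℕ → ℤ), resA_mem p l hl _ a.2⟩, rfl, ?_⟩
    rw [mem_Jb_iff]
    simpa [hres0] using hdvd
end

section
/- Let $p, q$ be distinct primes and $\ell \ge 1$. The ideal of the Burnside ring $R_\ell$ of $C_{p^\ell}$ generated by $\mathrm{ind}^\ell_{\ell-1}((q)) \cup \mathrm{jnd}^\ell_{\ell-1}((q))$, where $(q) \subseteq R_{\ell-1}$ is the principal ideal generated by $q$, equals the principal ideal $(q) \subseteq R_\ell$. -/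
/-- Characterization predicate: stabilized marks satisfying the Burnside congruences. -/
def Mk (p l : ℕ) (a : ℕ → ℤ) : Prop :=
  (∀ j, l ≤ j → a j = a l) ∧ ∀ i < l, (p:ℤ)^(l-i) ∣ a i - a (i+1)

lemma Mk_Xe (p l i : ℕ) : Mk p l (Xe p l i) := by
  constructor
  · intro j hj
    simp only [Xe, Nat.min_eq_right hj, min_self]
  · intro i' hi'
    simp only [Xe]
    rcases le_or_gt l i with h | h
    · rw [if_pos (le_trans (min_le_right _ _) h), if_pos (le_trans (min_le_right _ _) h)]
      simp
    · rw [Nat.min_eq_left (by omega), Nat.min_eq_left (by omega)]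
      rcases le_or_gt (i'+1) i with h1 | h1
      · rw [if_pos (by omega), if_pos h1]; simp
      · rcases le_or_gt i' i with h2 | h2
        · -- i' = i, jump of p^(l-i) = p^(l-i')
          have : i' = i := by omega
          subst this
          rw [if_pos le_rfl, if_neg (by omega)]
          simp
        · rw [if_neg (by omega), if_neg (by omega)]; simp

lemma Mk_mem {p l : ℕ} {a : ℕ → ℤ} (ha : a ∈ BR p l) : Mk p l a := by
  induction ha using Subring.closure_induction with
  | mem x hx => obtain ⟨i, rfl⟩ := hx; exact Mk_Xe p l i
  | zero => exact ⟨fun _ _ => rfl, fun _ _ => by simp⟩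
  | one => exact ⟨fun _ _ => rfl, fun _ _ => by simp⟩
  | add x y _ _ hx hy =>
      exact ⟨fun j hj => by simp only [Pi.add_apply, hx.1 j hj, hy.1 j hj],
        fun i hi => by
          have : (x+y) i - (x+y) (i+1) = (x i - x (i+1)) + (y i - y (i+1)) := by
            simp [Pi.add_apply]; ring
          rw [this]; exact dvd_add (hx.2 i hi) (hy.2 i hi)⟩
  | neg x _ hx =>
      exact ⟨fun j hj => by simp only [Pi.neg_apply, hx.1 j hj],
        fun i hi => by
          have : (-x) i - (-x) (i+1) = -(x i - x (i+1)) := by simp [Pi.neg_apply]; ring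
          rw [this]; exact dvd_neg.mpr (hx.2 i hi)⟩
  | mul x y _ _ hx hy =>
      exact ⟨fun j hj => by simp only [Pi.mul_apply, hx.1 j hj, hy.1 j hj],
        fun i hi => by
          have : (x*y) i - (x*y) (i+1)
              = (x i - x (i+1)) * y i + x (i+1) * (y i - y (i+1)) := by
            simp [Pi.mul_apply]; ring
          rw [this]
          exact dvd_add ((hx.2 i hi).mul_right _) ((hy.2 i hi).mul_left _)⟩

lemma teles (f : ℕ → ℤ) : ∀ n m, m ≤ n → ∑ i ∈ Finset.Ico m n, (f i - f (i+1)) = f m - f n := by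
  intro n
  induction n with
  | zero => intro m hm; interval_cases m; simp
  | succ n ih =>
      intro m hm
      rcases Nat.lt_or_ge m (n+1) with h | h
      · have hmn : m ≤ n := by omega
        rw [Finset.sum_Ico_succ_top hmn, ih m hmn]; ring
      · have : m = n + 1 := by omega
        subst this; simp

lemma mem_of_Mk {p l : ℕ} {a : ℕ → ℤ} (ha : Mk p l a) : a ∈ BR p l := by
  obtain ⟨hstab, hdvd⟩ := ha
  have key : a = ((a l : ℤ) : ℕ → ℤ) * Xe p l l
      + ∑ i ∈ Finset.range l, (((a i - a (i+1)) / (p:ℤ)^(l-i) : ℤ) : ℕ → ℤ) * Xe p l i := by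
    funext j
    have hXll : Xe p l l j = 1 := by
      simp [Xe, min_le_right]
    simp only [Pi.add_apply, Pi.mul_apply, Pi.intCast_apply, Finset.sum_apply, hXll, mul_one, Int.cast_id]
    have hterm : ∀ i ∈ Finset.range l,
        (a i - a (i+1)) / (p:ℤ)^(l-i) * Xe p l i j
          = if min j l ≤ i then a i - a (i+1) else 0 := by
      intro i hi
      simp only [Xe]
      split
      · exact Int.ediv_mul_cancel (hdvd i (Finset.mem_range.mp hi))
      · ring
    rw [Finset.sum_congr rfl hterm, Finset.sum_ite, Finset.sum_const_zero, add_zero]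
    have hfilt : Finset.filter (fun i => min j l ≤ i) (Finset.range l) = Finset.Ico (min j l) l := by
      ext i
      simp [Finset.mem_filter, Finset.mem_range, Finset.mem_Ico, and_comm]
    rw [hfilt, teles a l (min j l) (min_le_right _ _)]
    rcases le_or_gt l j with h | h
    · rw [Nat.min_eq_right h, hstab j h]; ring
    · rw [Nat.min_eq_left h.le]; ring
  rw [key]
  apply Subring.add_mem
  · exact Subring.mul_mem _ (intCast_mem _ _) (Subring.subset_closure ⟨l, rfl⟩)
  · apply Subring.sum_mem
    intro i _
    exact Subring.mul_mem _ (intCast_mem _ _) (Subring.subset_closure ⟨i, rfl⟩)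

/-- Fermat: `p ∣ a^p - a` for integers. -/
lemma fermat_pow_card (p : ℕ) (hp : p.Prime) (a : ℤ) : (p:ℤ) ∣ a^p - a := by
  haveI : Fact p.Prime := ⟨hp⟩
  rw [← ZMod.intCast_zmod_eq_zero_iff_dvd]
  push_cast
  rw [ZMod.pow_card]
  ring

/-- Fermat: `p ∣ a^(p-1) - 1` for `p ∤ a`. -/
lemma fermat_pow_card_sub_one (p : ℕ) (hp : p.Prime) (a : ℤ) (ha : ¬ (p:ℤ) ∣ a) :
    (p:ℤ) ∣ a^(p-1) - 1 := by
  haveI : Fact p.Prime := ⟨hp⟩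
  rw [← ZMod.intCast_zmod_eq_zero_iff_dvd]
  push_cast
  rw [ZMod.pow_card_sub_one_eq_one]
  · ring
  · rw [Ne, ZMod.intCast_zmod_eq_zero_iff_dvd]; exact ha

/-- Key lifting-the-exponent style lemma. -/
lemma key_dvd (p : ℕ) (m x y : ℤ) (hpm : (p:ℤ) ∣ m) (h : m ∣ x - y) :
    (p:ℤ) * m ∣ x^p - y^p := by
  have hgeom := geom_sum₂_mul x y p
  set S : ℤ := ∑ i ∈ Finset.range p, x ^ i * y ^ (p - 1 - i) with hS
  have hSm : m ∣ S - (p:ℤ) * y^(p-1) := by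
    have : S - (p:ℤ) * y^(p-1) = ∑ i ∈ Finset.range p, (x ^ i * y ^ (p-1-i) - y^(p-1)) := by
      rw [Finset.sum_sub_distrib, Finset.sum_const, Finset.card_range]
      simp [hS, nsmul_eq_mul]
    rw [this]
    apply Finset.dvd_sum
    intro i hi
    have hi' : i ≤ p - 1 := Nat.le_sub_one_of_lt (Finset.mem_range.mp hi)
    have : x ^ i * y ^ (p-1-i) - y^(p-1) = (x^i - y^i) * y^(p-1-i) := by
      rw [sub_mul, ← pow_add]
      congr 2
      omega
    rw [this]
    exact Dvd.dvd.mul_right (dvd_trans h (sub_dvd_pow_sub_pow x y i)) _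
  have : x^p - y^p = (x - y) * ((p:ℤ) * y^(p-1)) + (x - y) * (S - (p:ℤ)*y^(p-1)) := by
    rw [← mul_add]
    rw [← hgeom]; ring
  rw [this]
  apply dvd_add
  · obtain ⟨c, hc⟩ := h
    rw [hc]; ring_nf; exact ⟨c * y^(p-1), by ring⟩
  · obtain ⟨c, hc⟩ := h
    obtain ⟨d, hd⟩ := hSm
    obtain ⟨e, he⟩ := hpm
    rw [hc, hd, he]
    exact ⟨e * c * d, by ring⟩

lemma pdvdq_false {p q : ℕ} (hp : p.Prime) (hq : q.Prime) (hpq : q ≠ p) : ¬ (p:ℤ) ∣ (q:ℤ) := by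
  rw [Int.natCast_dvd_natCast]
  intro h
  rcases (Nat.Prime.eq_one_or_self_of_dvd hq p h) with h1 | h1
  · exact hp.one_lt.ne' h1
  · exact hpq h1.symm

/-- The ideal of `R_ℓ` generated by `ind^ℓ_{ℓ-1}((q)) ∪ jnd^ℓ_{ℓ-1}((q))`, where
`(q) ⊆ R_{ℓ-1}` is the principal ideal generated by the prime `q ≠ p`, equals the
principal ideal `(q) ⊆ R_ℓ`. -/
theorem S_of_q (p q l : ℕ) (hp : p.Prime) (hq : q.Prime) (hpq : q ≠ p) (hl : 1 ≤ l) :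
    Ideal.span {a : BR p l | ∃ b : BR p (l-1),
        b ∈ Ideal.span {((q : ℤ) : BR p (l-1))} ∧
        ((a : ℕ → ℤ) = indA p (l-1) (b : ℕ → ℤ) ∨ (a : ℕ → ℤ) = jndA p (l-1) (b : ℕ → ℤ))}
      = Ideal.span {((q : ℤ) : BR p l)} := by
  set m := l - 1 with hm
  have hml : m + 1 = l := by omega
  have hpos : 1 ≤ p := hp.one_lt.le
  have hpq' : ¬ (p:ℤ) ∣ (q:ℤ) := pdvdq_false hp hq hpq
  -- marks of X_{l,l-1}
  have hX : ∀ j, Xe p l m j = if j ≤ m then (p:ℤ) else 0 := by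
    intro j
    simp only [Xe]
    have h1 : (min j l ≤ m) ↔ j ≤ m := by omega
    have h2 : l - m = 1 := by omega
    rw [h2, pow_one]
    simp [h1]
  apply le_antisymm
  · -- each generator is divisible by q
    rw [Ideal.span_le]
    rintro a ⟨b, hb, hab⟩
    rw [Ideal.mem_span_singleton] at hb
    rw [SetLike.mem_coe, Ideal.mem_span_singleton]
    obtain ⟨c, hc⟩ := hb
    have hbf : ∀ j, (b : ℕ → ℤ) j = (q:ℤ) * (c : ℕ → ℤ) j := by
      intro j
      rw [hc]
      push_cast
      simp
    obtain ⟨hcs, hcd⟩ := Mk_mem c.2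
    rcases hab with h | h
    · -- additive transfer case: a = q * ind(c)
      have hdmem : indA p m (c : ℕ → ℤ) ∈ BR p l := by
        apply mem_of_Mk
        constructor
        · intro j hj
          simp only [indA]
          rw [if_neg (by omega), if_neg (by omega)]
        · intro i hi
          simp only [indA]
          rcases Nat.lt_or_ge i m with h2 | h2
          · rw [if_pos (by omega), if_pos (by omega)]
            have : (p:ℤ) * (c:ℕ→ℤ) i - (p:ℤ) * (c:ℕ→ℤ) (i+1)
                = (p:ℤ) * ((c:ℕ→ℤ) i - (c:ℕ→ℤ) (i+1)) := by ring
            rw [this]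
            have hle : l - i = (m - i) + 1 := by omega
            rw [hle, pow_succ, mul_comm]
            exact mul_dvd_mul (by norm_num) (hcd i h2)
          · have : i = m := by omega
            subst this
            rw [if_pos le_rfl, if_neg (by omega), sub_zero]
            have hle : l - m = 1 := by omega
            rw [hle, pow_one]
            exact Dvd.dvd.mul_right dvd_rfl _
      refine ⟨⟨indA p m (c : ℕ → ℤ), hdmem⟩, ?_⟩
      apply Subtype.ext
      funext j
      have : ((((q:ℤ) : BR p l) * ⟨indA p m (c : ℕ → ℤ), hdmem⟩ : BR p l) : ℕ → ℤ) j
          = (q:ℤ) * indA p m (c : ℕ → ℤ) j := by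
        push_cast
        simp
      rw [this, h]
      simp only [indA, hbf]
      split <;> ring
    · -- multiplicative transfer case
      set e : ℕ → ℤ := fun j => if j ≤ m then (q:ℤ)^(p-1) * ((c:ℕ→ℤ) j)^p else (c:ℕ→ℤ) m with he
      have hemem : e ∈ BR p l := by
        apply mem_of_Mk
        constructor
        · intro j hj
          simp only [he]
          rw [if_neg (by omega), if_neg (by omega)]
        · intro i hi
          simp only [he]
          rcases Nat.lt_or_ge i m with h2 | h2
          · rw [if_pos (by omega), if_pos (by omega)]
            have heq : (q:ℤ)^(p-1) * ((c:ℕ→ℤ) i)^p - (q:ℤ)^(p-1) * ((c:ℕ→ℤ) (i+1))^p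
                = (q:ℤ)^(p-1) * (((c:ℕ→ℤ) i)^p - ((c:ℕ→ℤ) (i+1))^p) := by ring
            rw [heq]
            apply Dvd.dvd.mul_left
            have hle : l - i = 1 + (m - i) := by omega
            rw [hle, pow_add, pow_one]
            apply key_dvd
            · exact dvd_pow_self (p:ℤ) (by omega)
            · exact hcd i h2
          · have : i = m := by omega
            subst this
            rw [if_pos le_rfl, if_neg (by omega)]
            have hle : l - m = 1 := by omega
            rw [hle, pow_one]
            have key : (q:ℤ)^(p-1) * ((c:ℕ→ℤ) m)^p - (c:ℕ→ℤ) m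
                = (q:ℤ)^(p-1) * (((c:ℕ→ℤ) m)^p - (c:ℕ→ℤ) m)
                  + ((q:ℤ)^(p-1) - 1) * (c:ℕ→ℤ) m := by ring
            rw [key]
            exact dvd_add ((fermat_pow_card p hp _).mul_left _)
              ((fermat_pow_card_sub_one p hp _ hpq').mul_right _)
      refine ⟨⟨e, hemem⟩, ?_⟩
      apply Subtype.ext
      funext j
      have : ((((q:ℤ) : BR p l) * ⟨e, hemem⟩ : BR p l) : ℕ → ℤ) j = (q:ℤ) * e j := by
        push_cast
        simp
      rw [this, h]
      simp only [jndA, he, hbf]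
      have hqp : (q:ℤ) * (q:ℤ)^(p-1) = (q:ℤ)^p := by
        conv_rhs => rw [show p = (p-1)+1 by omega]
        rw [pow_succ]
        ring
      split
      · rw [mul_pow, ← mul_assoc, hqp]
      · rfl
  · -- q is in the span of the transfers
    have hk1 : (p:ℤ) ∣ (q:ℤ)^p - (q:ℤ) := fermat_pow_card p hp _
    have hk2 : (p:ℤ) ∣ (q:ℤ)^(p-1) - 1 := fermat_pow_card_sub_one p hp _ hpq'
    set k1 : ℤ := ((q:ℤ)^p - (q:ℤ)) / p with hk1d
    set k2 : ℤ := ((q:ℤ)^(p-1) - 1) / p with hk2d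
    have hk1e : (p:ℤ) * k1 = (q:ℤ)^p - (q:ℤ) := Int.mul_ediv_cancel' hk1
    have hk2e : (p:ℤ) * k2 = (q:ℤ)^(p-1) - 1 := Int.mul_ediv_cancel' hk2
    set nq : BR p l := ((q:ℤ) : BR p l) * Xb p l m with hnq
    set mq : BR p l := ((q:ℤ) : BR p l) + (k1 : BR p l) * Xb p l m with hmq
    have hbcoe : ∀ j, (((q:ℤ) : BR p (l-1)) : ℕ → ℤ) j = (q:ℤ) := by
      intro j; push_cast; simp
    have hnqS : nq ∈ {a : BR p l | ∃ b : BR p (l-1),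
        b ∈ Ideal.span {((q : ℤ) : BR p (l-1))} ∧
        ((a : ℕ → ℤ) = indA p (l-1) (b : ℕ → ℤ) ∨ (a : ℕ → ℤ) = jndA p (l-1) (b : ℕ → ℤ))} := by
      refine ⟨((q:ℤ) : BR p (l-1)), Ideal.mem_span_singleton_self _, Or.inl ?_⟩
      funext j
      have hc : (nq : ℕ → ℤ) j = (q:ℤ) * Xe p l m j := by
        rw [hnq]; push_cast; simp [Xb]
      rw [hc, hX j]
      simp only [indA, hbcoe, ← hm]
      split <;> ring
    have hmqS : mq ∈ {a : BR p l | ∃ b : BR p (l-1),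
        b ∈ Ideal.span {((q : ℤ) : BR p (l-1))} ∧
        ((a : ℕ → ℤ) = indA p (l-1) (b : ℕ → ℤ) ∨ (a : ℕ → ℤ) = jndA p (l-1) (b : ℕ → ℤ))} := by
      refine ⟨((q:ℤ) : BR p (l-1)), Ideal.mem_span_singleton_self _, Or.inr ?_⟩
      funext j
      have hc : (mq : ℕ → ℤ) j = (q:ℤ) + k1 * Xe p l m j := by
        rw [hmq]; push_cast; simp [Xb]
      rw [hc, hX j]
      simp only [jndA, hbcoe, ← hm]
      split
      · rw [mul_comm k1, hk1e]; ring
      · ring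
    rw [Ideal.span_le, Set.singleton_subset_iff, SetLike.mem_coe]
    have hqeq : ((q:ℤ) : BR p l) = mq - (k2 : BR p l) * nq := by
      apply Subtype.ext
      funext j
      have hc : ((mq - (k2 : BR p l) * nq : BR p l) : ℕ → ℤ) j
          = ((q:ℤ) + k1 * Xe p l m j) - k2 * ((q:ℤ) * Xe p l m j) := by
        rw [hmq, hnq]; push_cast; simp [Xb]; try ring
      rw [hc, hX j]
      have hcl : (((q:ℤ) : BR p l) : ℕ → ℤ) j = (q:ℤ) := by push_cast; simp
      rw [hcl]
      split
      · have hqp : (q:ℤ)^(p-1) * (q:ℤ) = (q:ℤ)^p := by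
          conv_rhs => rw [show p = (p-1)+1 by omega]
          rw [pow_succ]
        have h1 : k1 * (p:ℤ) = (q:ℤ)^p - q := by rw [mul_comm]; exact hk1e
        have h2 : k2 * ((q:ℤ) * (p:ℤ)) = ((q:ℤ)^(p-1) - 1) * q := by
          rw [show k2 * ((q:ℤ) * (p:ℤ)) = ((p:ℤ) * k2) * q by ring, hk2e]
        have h3 : ((q:ℤ)^(p-1) - 1) * q = (q:ℤ)^p - q := by
          rw [sub_mul, one_mul, hqp]
        rw [h1, h2, h3]
        ring
      · ring
    rw [hqeq]
    exact Ideal.sub_mem _ (Ideal.subset_span hmqS)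
      (Ideal.mul_mem_left _ _ (Ideal.subset_span hnqS))
end

section
/- Let $p$ be a prime, $H \le G$ cyclic $p$-groups of orders $p^k \le p^\ell$, and $A = \coprod_{0\le i \le k} (\coprod_{m_i} G/H_i)$ a finite $G$-set over $G/H$ (with $m_i \ge 0$). For a subgroup $K = H_j \le G$, the number of sections $s : G/H \to A$ of the projection $A \to G/H$ whose stabilizer contains $K$ equals $\bigl(\sum_{(K\cap H) \le H_i \le H} m_i\,|H : H_i|\bigr)^{|G : KH|}$. -/
attribute [local instance] Classical.propDecidable

/-! For `G = C_{p^ℓ} = ℤ/p^ℓℤ`, `H = H_k` its subgroup of order `p^k`, we model the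
`G`-set `G/H_i` as `ZMod (p^(ℓ-i))` with `G` acting by translation through `ZMod.cast`.
`TotA` is the `G`-set `A = ∐_{0 ≤ i ≤ k} (∐_{m_i} G/H_i)`, `PrA` the projection `A → G/H`,
and `actA` the `G`-action on sections `s : G/H → A` given by `(g•s)(x) = g·s(g⁻¹x)`. -/

/-- The `G`-set `A = ∐_{0 ≤ i ≤ k} (∐_{m_i} G/H_i)`. -/
def TotA (p l k : ℕ) (m : ℕ → ℕ) : Type :=
  Σ i : Fin (k+1), Fin (m (i : ℕ)) × ZMod (p ^ (l - (i : ℕ)))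

/-- The projection `Pr : A → G/H`, the disjoint union of the natural projections. -/
def PrA (p l k : ℕ) (m : ℕ → ℕ) (a : TotA p l k m) : ZMod (p ^ (l - k)) :=
  ZMod.cast a.2.2

/-- The action of `g ∈ G` on a section `s : G/H → A`, `(g•s)(x) = g·s(g⁻¹x)`. -/
def actA (p l k : ℕ) (m : ℕ → ℕ) (g : ZMod (p ^ l))
    (s : ZMod (p ^ (l - k)) → TotA p l k m) : ZMod (p ^ (l - k)) → TotA p l k m :=
  fun x => ⟨(s (x - ZMod.cast g)).1, (s (x - ZMod.cast g)).2.1,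
            (s (x - ZMod.cast g)).2.2 + ZMod.cast g⟩

/-- The subgroup `H_j = p^{ℓ-j}ℤ/p^ℓℤ` of order `p^j` of `G = ℤ/p^ℓℤ`. -/
def Hs (p l j : ℕ) : AddSubgroup (ZMod (p ^ l)) :=
  AddSubgroup.zmultiples ((p ^ (l - j) : ℕ) : ZMod (p ^ l))

/-! ### Auxiliary lemmas -/

lemma Hs_mem_iff {p l j : ℕ} (g : ZMod (p ^ l)) :
    g ∈ Hs p l j ↔ ∃ c : ℤ, g = ((c * (p : ℤ) ^ (l - j) : ℤ) : ZMod (p ^ l)) := by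
  rw [Hs, AddSubgroup.mem_zmultiples_iff]
  constructor
  · rintro ⟨c, rfl⟩; exact ⟨c, by push_cast [zsmul_eq_mul]; ring⟩
  · rintro ⟨c, rfl⟩; exact ⟨c, by push_cast [zsmul_eq_mul]; ring⟩

lemma Hs_le_Hs {p l a b : ℕ} (h : a ≤ b) : Hs p l a ≤ Hs p l b := by
  rw [Hs, AddSubgroup.zmultiples_le, Hs_mem_iff]
  refine ⟨(p : ℤ) ^ ((l - a) - (l - b)), ?_⟩
  push_cast
  rw [← pow_add]
  congr 2
  omega

lemma card_Hs {p l a : ℕ} (hp : p.Prime) (ha : a ≤ l) : Nat.card (Hs p l a) = p ^ a := by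
  rw [Hs, Nat.card_zmultiples, ZMod.addOrderOf_coe _ (pow_ne_zero l hp.ne_zero),
    Nat.gcd_eq_right (pow_dvd_pow p (Nat.sub_le l a)), Nat.pow_div (Nat.sub_le l a) hp.pos]
  congr 1
  omega

lemma Hs_le_iff {p l a b : ℕ} (hp : p.Prime) (ha : a ≤ l) (hb : b ≤ l) :
    Hs p l a ≤ Hs p l b ↔ a ≤ b := by
  constructor
  · intro h
    have := AddSubgroup.card_dvd_of_le h
    rw [card_Hs hp ha, card_Hs hp hb] at this
    exact (Nat.pow_dvd_pow_iff_le_right hp.one_lt).mp this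
  · exact Hs_le_Hs

lemma index_Hs {p l a : ℕ} (hp : p.Prime) (ha : a ≤ l) : (Hs p l a).index = p ^ (l - a) := by
  have h := AddSubgroup.index_mul_card (Hs p l a)
  rw [card_Hs hp ha, Nat.card_zmod] at h
  have h2 : (Hs p l a).index * p ^ a = p ^ (l - a) * p ^ a := by
    rw [h, ← pow_add]; congr 1; omega
  exact Nat.eq_of_mul_eq_mul_right (pow_pos hp.pos a) h2

lemma relindex_Hs {p l i k : ℕ} (hp : p.Prime) (hik : i ≤ k) (hk : k ≤ l) :
    (Hs p l i).relIndex (Hs p l k) = p ^ (k - i) := by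
  have h := AddSubgroup.relIndex_mul_index (Hs_le_Hs (p := p) (l := l) hik)
  rw [index_Hs hp hk, index_Hs hp (hik.trans hk)] at h
  have h2 : (Hs p l i).relIndex (Hs p l k) * p ^ (l - k) = p ^ (k - i) * p ^ (l - k) := by
    rw [h, ← pow_add]; congr 1; omega
  exact Nat.eq_of_mul_eq_mul_right (pow_pos hp.pos _) h2

lemma cast_add' {n m : ℕ} (h : m ∣ n) (a b : ZMod n) :
    (ZMod.cast (a + b) : ZMod m) = ZMod.cast a + ZMod.cast b := by
  have := (ZMod.castHom h (ZMod m)).map_add a b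
  simpa [ZMod.castHom_apply] using this

lemma cast_sub' {n m : ℕ} (h : m ∣ n) (a b : ZMod n) :
    (ZMod.cast (a - b) : ZMod m) = ZMod.cast a - ZMod.cast b := by
  have := (ZMod.castHom h (ZMod m)).map_sub a b
  simpa [ZMod.castHom_apply] using this

lemma natCast_val_self {n : ℕ} [NeZero n] (a : ZMod n) : ((a.val : ℕ) : ZMod n) = a :=
  ZMod.natCast_rightInverse a

/-- The fiber of `ZMod (p^(l-i)) → ZMod (p^(l-k))` over any point has `p^(k-i)` elements. -/
def fiberEquiv (p l k i : ℕ) (hp : 1 < p) (hik : i ≤ k) (hk : k ≤ l) (y : ZMod (p ^ (l - k))) :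
    {v : ZMod (p ^ (l - i)) // (ZMod.cast v : ZMod (p ^ (l - k))) = y} ≃ ZMod (p ^ (k - i)) := by
  haveI h1 : NeZero (p ^ (l - i)) := ⟨pow_ne_zero _ (by omega)⟩
  haveI h2 : NeZero (p ^ (l - k)) := ⟨pow_ne_zero _ (by omega)⟩
  haveI h3 : NeZero (p ^ (k - i)) := ⟨pow_ne_zero _ (by omega)⟩
  have hdvd : p ^ (l - k) ∣ p ^ (l - i) := pow_dvd_pow p (by omega)
  have hmul : p ^ (l - k) * p ^ (k - i) = p ^ (l - i) := by rw [← pow_add]; congr 1; omega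
  have hpos : 0 < p ^ (l - k) := pow_pos (by omega) _
  refine
    { toFun := fun v => ((v.1.val / p ^ (l - k) : ℕ) : ZMod (p ^ (k - i)))
      invFun := fun w => ⟨((y.val + p ^ (l - k) * w.val : ℕ) : ZMod (p ^ (l - i))), ?_⟩
      left_inv := ?_
      right_inv := ?_ }
  · rw [ZMod.cast_natCast hdvd, Nat.cast_add, Nat.cast_mul, natCast_val_self,
      ZMod.natCast_self, zero_mul, add_zero]
  · rintro ⟨v, hv⟩
    apply Subtype.ext
    simp only
    have hval : y.val = v.val % p ^ (l - k) := by
      have h4 : (ZMod.cast v : ZMod (p ^ (l - k))) = ((v.val : ℕ) : ZMod (p ^ (l - k))) := by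
        rw [ZMod.natCast_val]
      rw [h4] at hv
      rw [← hv, ZMod.val_natCast]
    have hq : v.val / p ^ (l - k) < p ^ (k - i) := by
      rw [Nat.div_lt_iff_lt_mul hpos]
      calc v.val < p ^ (l - i) := ZMod.val_lt v
        _ = p ^ (k - i) * p ^ (l - k) := by rw [← hmul]; ring
    rw [ZMod.val_natCast, Nat.mod_eq_of_lt hq, hval, Nat.mod_add_div]
    exact natCast_val_self v
  · intro w
    simp only
    have hlt : y.val + p ^ (l - k) * w.val < p ^ (l - i) := by
      have h4 : y.val < p ^ (l - k) := ZMod.val_lt y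
      have h5 : w.val < p ^ (k - i) := ZMod.val_lt w
      calc y.val + p ^ (l - k) * w.val < p ^ (l - k) * (w.val + 1) := by ring_nf; omega
        _ ≤ p ^ (l - k) * p ^ (k - i) := Nat.mul_le_mul_left _ (by omega)
        _ = p ^ (l - i) := hmul
    rw [ZMod.val_natCast, Nat.mod_eq_of_lt hlt, Nat.add_mul_div_left _ _ hpos,
      Nat.div_eq_of_lt (ZMod.val_lt y), zero_add]
    exact natCast_val_self w

/-- Any section fixed by `H_j` takes values in components of index at least `min j k`. -/
lemma comp_bound {p l k j : ℕ} (hp : 1 < p) (hk : k ≤ l) (hj : j ≤ l) {m : ℕ → ℕ}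
    {s : ZMod (p ^ (l - k)) → TotA p l k m}
    (hfix : ∀ g ∈ Hs p l j, actA p l k m g s = s) (x : ZMod (p ^ (l - k))) :
    min j k ≤ ((s x).1 : ℕ) := by
  set w := min j k with hw
  have hwj : w ≤ j := min_le_left _ _
  have hwk : w ≤ k := min_le_right _ _
  have hg : ((p ^ (l - w) : ℕ) : ZMod (p ^ l)) ∈ Hs p l j := by
    rw [Hs_mem_iff]
    refine ⟨(p : ℤ) ^ (j - w), ?_⟩
    push_cast
    rw [← pow_add]
    congr 2
    omega
  have h := congrFun (hfix _ hg) x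
  simp only [actA] at h
  have hc : (ZMod.cast ((p ^ (l - w) : ℕ) : ZMod (p ^ l)) : ZMod (p ^ (l - k))) = 0 := by
    rw [ZMod.cast_natCast (pow_dvd_pow p (Nat.sub_le l k)),
      ZMod.natCast_eq_zero_iff]
    exact pow_dvd_pow p (by omega)
  rw [hc, sub_zero] at h
  have hik : ((s x).1 : ℕ) ≤ k := Nat.lt_succ_iff.mp (s x).1.isLt
  revert h hik
  generalize s x = a
  rcases a with ⟨i, u, v⟩
  intro h hik
  dsimp only at h hik ⊢
  injection h with h1 h2
  have h0 := add_eq_left.mp (congrArg Prod.snd h2)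
  rw [ZMod.cast_natCast (m := p ^ (l - (i : ℕ))) (pow_dvd_pow p (Nat.sub_le l _)),
    ZMod.natCast_eq_zero_iff] at h0
  have h3 := (Nat.pow_dvd_pow_iff_le_right hp).mp h0
  omega

/-- The canonical representative in `G/H_k` of a coset in `G/H_d`. -/
def reprZ (p l k d : ℕ) (z : ZMod (p ^ (l - d))) : ZMod (p ^ (l - k)) :=
  ((z.val : ℕ) : ZMod (p ^ (l - k)))

/-- The offset of `x` from the canonical representative of its `H_d`-coset. -/
def deltaZ (p l k d : ℕ) (x : ZMod (p ^ (l - k))) : ℕ :=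
  (x - reprZ p l k d (ZMod.cast x)).val

lemma pi_repr {p l k d : ℕ} (hp : 1 < p) (hkd : k ≤ d) (hdl : d ≤ l)
    (z : ZMod (p ^ (l - d))) : (ZMod.cast (reprZ p l k d z) : ZMod (p ^ (l - d))) = z := by
  haveI : NeZero (p ^ (l - d)) := ⟨pow_ne_zero _ (by omega)⟩
  rw [reprZ, ZMod.cast_natCast (m := p ^ (l - d)) (pow_dvd_pow p (by omega))]
  exact natCast_val_self z

lemma delta_cast_base {p l k d : ℕ} (hp : 1 < p) (hk : k ≤ l) (x : ZMod (p ^ (l - k))) :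
    ((deltaZ p l k d x : ℕ) : ZMod (p ^ (l - k))) = x - reprZ p l k d (ZMod.cast x) := by
  haveI : NeZero (p ^ (l - k)) := ⟨pow_ne_zero _ (by omega)⟩
  exact natCast_val_self _

lemma delta_dvd {p l k d : ℕ} (hp : 1 < p) (hkd : k ≤ d) (hdl : d ≤ l)
    (x : ZMod (p ^ (l - k))) : p ^ (l - d) ∣ deltaZ p l k d x := by
  haveI : NeZero (p ^ (l - k)) := ⟨pow_ne_zero _ (by omega)⟩
  haveI : NeZero (p ^ (l - d)) := ⟨pow_ne_zero _ (by omega)⟩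
  rw [← ZMod.natCast_eq_zero_iff, deltaZ, ZMod.natCast_val,
    cast_sub' (pow_dvd_pow p (by omega)), pi_repr hp hkd hdl, sub_self]

lemma delta_self {p l k : ℕ} (hp : 1 < p) (hk : k ≤ l) (x : ZMod (p ^ (l - k))) :
    deltaZ p l k k x = 0 := by
  haveI : NeZero (p ^ (l - k)) := ⟨pow_ne_zero _ (by omega)⟩
  rw [deltaZ, ZMod.cast_id, reprZ, natCast_val_self, sub_self, ZMod.val_zero]

lemma delta_dvd_j {p l k j : ℕ} (hp : 1 < p) (hk : k ≤ l) (hj : j ≤ l)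
    (x : ZMod (p ^ (l - k))) : p ^ (l - j) ∣ deltaZ p l k (max j k) x := by
  rcases le_total j k with h | h
  · rw [max_eq_right h, delta_self hp hk]
    exact dvd_zero _
  · rw [max_eq_left h]
    exact delta_dvd hp h hj x

lemma delta_repr {p l k d : ℕ} (hp : 1 < p) (hkd : k ≤ d) (hdl : d ≤ l)
    (z : ZMod (p ^ (l - d))) : deltaZ p l k d (reprZ p l k d z) = 0 := by
  haveI : NeZero (p ^ (l - k)) := ⟨pow_ne_zero _ (by omega)⟩
  rw [deltaZ, pi_repr hp hkd hdl, sub_self, ZMod.val_zero]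

/-- The key cocycle identity for the inverse map. -/
lemma shift_eq {p l k j : ℕ} (hp : 1 < p) (hk : k ≤ l) (hj : j ≤ l) (c : ℤ) {i : ℕ}
    (hik : i ≤ k) (hwi : min j k ≤ i) (x : ZMod (p ^ (l - k))) :
    ((deltaZ p l k (max j k) (x - ((c * (p : ℤ) ^ (l - j) : ℤ) : ZMod (p ^ (l - k)))) : ℕ) :
        ZMod (p ^ (l - i)))
      + ((c * (p : ℤ) ^ (l - j) : ℤ) : ZMod (p ^ (l - i)))
    = ((deltaZ p l k (max j k) x : ℕ) : ZMod (p ^ (l - i))) := by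
  haveI : NeZero (p ^ (l - k)) := ⟨pow_ne_zero _ (by omega)⟩
  rcases le_total j k with hjk | hkj
  · have he0 : ((c * (p : ℤ) ^ (l - j) : ℤ) : ZMod (p ^ (l - k))) = 0 := by
      rw [ZMod.intCast_zmod_eq_zero_iff_dvd]
      push_cast
      exact Dvd.dvd.mul_left (pow_dvd_pow (p : ℤ) (by omega)) c
    rw [he0, sub_zero, add_eq_left, ZMod.intCast_zmod_eq_zero_iff_dvd]
    push_cast
    exact Dvd.dvd.mul_left (pow_dvd_pow (p : ℤ) (by omega : l - i ≤ l - j)) c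
  · have hik' : i = k := le_antisymm hik (by omega)
    subst hik'
    have hdvd1 : p ^ (l - max j i) ∣ p ^ (l - i) := pow_dvd_pow p (by omega)
    have hpi : (ZMod.cast (x - ((c * (p : ℤ) ^ (l - j) : ℤ) : ZMod (p ^ (l - i)))) :
        ZMod (p ^ (l - max j i))) = ZMod.cast x := by
      rw [cast_sub' hdvd1, sub_eq_self, ZMod.cast_intCast (m := p ^ (l - max j i)) hdvd1,
        ZMod.intCast_zmod_eq_zero_iff_dvd]
      push_cast
      exact Dvd.dvd.mul_left (pow_dvd_pow (p : ℤ) (by omega : l - max j i ≤ l - j)) c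
    rw [delta_cast_base hp hk, delta_cast_base hp hk, hpi]
    ring

/-- The main bijection. -/
def mainEquiv (p l k j : ℕ) (hp : 1 < p) (hk : k ≤ l) (hj : j ≤ l) (m : ℕ → ℕ) :
    {s : ZMod (p ^ (l - k)) → TotA p l k m //
        (∀ x, PrA p l k m (s x) = x) ∧ ∀ g ∈ Hs p l j, actA p l k m g s = s}
    ≃ (∀ z : ZMod (p ^ (l - max j k)),
        {a : TotA p l k m // PrA p l k m a = reprZ p l k (max j k) z
          ∧ min j k ≤ (a.1 : ℕ)}) := by
  have hd : max j k ≤ l := max_le hj hk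
  have hkd : k ≤ max j k := le_max_right _ _
  haveI hbz : NeZero (p ^ (l - k)) := ⟨pow_ne_zero _ (by omega)⟩
  refine
    { toFun := fun s z => ⟨s.1 (reprZ p l k (max j k) z), s.2.1 _,
        comp_bound hp hk hj s.2.2 _⟩
      invFun := fun f => ⟨fun x => ⟨(f (ZMod.cast x)).1.1, (f (ZMod.cast x)).1.2.1,
          (f (ZMod.cast x)).1.2.2 +
            ((deltaZ p l k (max j k) x : ℕ) :
              ZMod (p ^ (l - ((f (ZMod.cast x)).1.1 : ℕ))))⟩, ?_, ?_⟩
      left_inv := ?_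
      right_inv := ?_ }
  · -- sections: PrA ∘ s = id
    intro x
    have hik : ((f (ZMod.cast x)).1.1 : ℕ) ≤ k := Nat.lt_succ_iff.mp (f (ZMod.cast x)).1.1.isLt
    have hpr : (ZMod.cast ((f (ZMod.cast x)).1.2.2) : ZMod (p ^ (l - k)))
        = reprZ p l k (max j k) (ZMod.cast x) := (f (ZMod.cast x)).2.1
    show ZMod.cast ((f (ZMod.cast x)).1.2.2 + _) = x
    rw [cast_add' (pow_dvd_pow p (by omega : l - k ≤ l - ((f (ZMod.cast x)).1.1 : ℕ))),
      hpr, ZMod.cast_natCast (m := p ^ (l - k)) (pow_dvd_pow p (by omega)),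
      delta_cast_base hp hk]
    ring
  · -- fixedness
    intro g hg
    obtain ⟨c, rfl⟩ := (Hs_mem_iff g).mp hg
    funext x
    simp only [actA]
    have hcb : (ZMod.cast ((c * (p : ℤ) ^ (l - j) : ℤ) : ZMod (p ^ l)) : ZMod (p ^ (l - k)))
        = ((c * (p : ℤ) ^ (l - j) : ℤ) : ZMod (p ^ (l - k))) :=
      ZMod.cast_intCast (m := p ^ (l - k)) (pow_dvd_pow p (Nat.sub_le l k)) _
    rw [hcb]
    have hpi2 : (ZMod.cast (x - ((c * (p : ℤ) ^ (l - j) : ℤ) : ZMod (p ^ (l - k)))) :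
        ZMod (p ^ (l - max j k))) = ZMod.cast x := by
      rw [cast_sub' (pow_dvd_pow p (by omega : l - max j k ≤ l - k)), sub_eq_self,
        ZMod.cast_intCast (m := p ^ (l - max j k)) (pow_dvd_pow p (by omega)),
        ZMod.intCast_zmod_eq_zero_iff_dvd]
      push_cast
      exact Dvd.dvd.mul_left (pow_dvd_pow (p : ℤ) (by omega : l - max j k ≤ l - j)) c
    beta_reduce
    rw [hpi2]
    have hik : ((f (ZMod.cast x)).1.1 : ℕ) ≤ k := Nat.lt_succ_iff.mp (f (ZMod.cast x)).1.1.isLt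
    have hwi : min j k ≤ ((f (ZMod.cast x)).1.1 : ℕ) := (f (ZMod.cast x)).2.2
    refine congrArg (Sigma.mk _) (congrArg (Prod.mk _) ?_)
    rw [ZMod.cast_intCast (m := p ^ (l - ((f (ZMod.cast x)).1.1 : ℕ)))
      (pow_dvd_pow p (by omega)), add_assoc]
    exact congrArg _ (shift_eq hp hk hj c hik hwi x)
  · -- left inverse
    rintro ⟨s, hpr, hfix⟩
    apply Subtype.ext
    funext x
    dsimp only
    obtain ⟨c, hc⟩ := delta_dvd_j hp hk hj (x := x)
    have hg : ((deltaZ p l k (max j k) x : ℕ) : ZMod (p ^ l)) ∈ Hs p l j := by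
      rw [Hs_mem_iff]
      exact ⟨(c : ℤ), by rw [hc]; push_cast; ring⟩
    have h := congrFun (hfix _ hg) x
    simp only [actA] at h
    have hcb : (ZMod.cast ((deltaZ p l k (max j k) x : ℕ) : ZMod (p ^ l)) : ZMod (p ^ (l - k)))
        = x - reprZ p l k (max j k) (ZMod.cast x) := by
      rw [ZMod.cast_natCast (m := p ^ (l - k)) (pow_dvd_pow p (Nat.sub_le l k))]
      exact delta_cast_base hp hk x
    rw [hcb] at h
    have harg : x - (x - reprZ p l k (max j k) (ZMod.cast x))
        = reprZ p l k (max j k) (ZMod.cast x) := by ring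
    rw [harg] at h
    rw [ZMod.cast_natCast
      (m := p ^ (l - ((s (reprZ p l k (max j k) (ZMod.cast x))).1 : ℕ)))
      (pow_dvd_pow p (Nat.sub_le l _))] at h
    exact h
  · -- right inverse
    intro f
    funext z
    apply Subtype.ext
    have hpi : (ZMod.cast (reprZ p l k (max j k) z) : ZMod (p ^ (l - max j k))) = z :=
      pi_repr hp hkd hd z
    dsimp only
    rw [hpi, delta_repr hp hkd hd z, Nat.cast_zero, add_zero]
    rfl

lemma natCardSigma {ι : Type} [Fintype ι] {β : ι → Type} [∀ i, Finite (β i)] :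
    Nat.card (Σ i, β i) = ∑ i, Nat.card (β i) := by
  haveI : ∀ i, Fintype (β i) := fun i => Fintype.ofFinite _
  simp [Nat.card_eq_fintype_card, Fintype.card_sigma]

/-- The number of sections `s : G/H → A` of the projection `A → G/H` whose stabilizer
contains `K = H_j` equals `(∑_{(K∩H) ≤ H_i ≤ H} m_i |H:H_i|)^{|G:KH|}`. -/
theorem card_sections_fixed_by (p l k j : ℕ) (hp : p.Prime) (hk : k ≤ l) (hj : j ≤ l)
    (m : ℕ → ℕ) :
    Nat.card {s : ZMod (p ^ (l - k)) → TotA p l k m //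
        (∀ x, PrA p l k m (s x) = x) ∧ ∀ g ∈ Hs p l j, actA p l k m g s = s}
      = (∑ i ∈ Finset.range (k+1),
          if Hs p l j ⊓ Hs p l k ≤ Hs p l i then m i * (Hs p l i).relIndex (Hs p l k)
          else 0) ^ (Hs p l j ⊔ Hs p l k).index := by
  have hp1 : 1 < p := hp.one_lt
  have hd : max j k ≤ l := max_le hj hk
  haveI hzd : NeZero (p ^ (l - max j k)) := ⟨pow_ne_zero _ (by omega)⟩
  haveI hzb : NeZero (p ^ (l - k)) := ⟨pow_ne_zero _ (by omega)⟩
  haveI hzi : ∀ i : Fin (k+1), NeZero (p ^ (l - (i : ℕ))) :=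
    fun i => ⟨pow_ne_zero _ (by omega)⟩
  have hsup : Hs p l j ⊔ Hs p l k = Hs p l (max j k) := by
    rcases le_total j k with h | h
    · rw [sup_eq_right.mpr (Hs_le_Hs h), max_eq_right h]
    · rw [sup_eq_left.mpr (Hs_le_Hs h), max_eq_left h]
  have hinf : Hs p l j ⊓ Hs p l k = Hs p l (min j k) := by
    rcases le_total j k with h | h
    · rw [inf_eq_left.mpr (Hs_le_Hs h), min_eq_left h]
    · rw [inf_eq_right.mpr (Hs_le_Hs h), min_eq_right h]
  rw [hsup, hinf, index_Hs hp hd]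
  have hsum : ∀ i ∈ Finset.range (k+1),
      (if Hs p l (min j k) ≤ Hs p l i then m i * (Hs p l i).relIndex (Hs p l k) else 0)
      = (if min j k ≤ i then m i * p ^ (k - i) else 0) := by
    intro i hi
    have hik : i ≤ k := Nat.lt_succ_iff.mp (Finset.mem_range.mp hi)
    rw [Hs_le_iff hp (by omega) (by omega), relindex_Hs hp hik hk]
    by_cases h : min j k ≤ i
    · simp [h]
    · simp [h]
  rw [Finset.sum_congr rfl hsum]
  rw [Nat.card_congr (mainEquiv p l k j hp1 hk hj m), Nat.card_pi]
  have hfib : ∀ y : ZMod (p ^ (l - k)),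
      Nat.card {a : TotA p l k m // PrA p l k m a = y ∧ min j k ≤ (a.1 : ℕ)}
      = ∑ i ∈ Finset.range (k+1), if min j k ≤ i then m i * p ^ (k - i) else 0 := by
    intro y
    have e1 : {a : TotA p l k m // PrA p l k m a = y ∧ min j k ≤ (a.1 : ℕ)}
        ≃ Σ i : Fin (k+1), (Fin (m (i : ℕ)) ×
          {v : ZMod (p ^ (l - (i : ℕ))) //
            (ZMod.cast v : ZMod (p ^ (l - k))) = y ∧ min j k ≤ (i : ℕ)}) :=
      { toFun := fun a => ⟨a.1.1, a.1.2.1, ⟨a.1.2.2, a.2⟩⟩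
        invFun := fun b => ⟨⟨b.1, b.2.1, b.2.2.1⟩, b.2.2.2⟩
        left_inv := fun ⟨⟨i, u, v⟩, h⟩ => rfl
        right_inv := fun ⟨i, u, v, h⟩ => rfl }
    rw [Nat.card_congr e1, natCardSigma,
      ← Fin.sum_univ_eq_sum_range (fun i => if min j k ≤ i then m i * p ^ (k - i) else 0) (k+1)]
    apply Finset.sum_congr rfl
    intro i _
    have hik : (i : ℕ) ≤ k := Nat.lt_succ_iff.mp i.isLt
    rw [Nat.card_prod]
    by_cases hwi : min j k ≤ (i : ℕ)
    · rw [if_pos hwi]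
      have e2 : {v : ZMod (p ^ (l - (i : ℕ))) //
            (ZMod.cast v : ZMod (p ^ (l - k))) = y ∧ min j k ≤ (i : ℕ)}
          ≃ ZMod (p ^ (k - (i : ℕ))) :=
        (Equiv.subtypeEquivRight (fun v => and_iff_left hwi)).trans
          (fiberEquiv p l k i hp1 hik hk y)
      rw [Nat.card_congr e2, Nat.card_zmod, Nat.card_eq_fintype_card, Fintype.card_fin]
    · rw [if_neg hwi]
      haveI : IsEmpty {v : ZMod (p ^ (l - (i : ℕ))) //
          (ZMod.cast v : ZMod (p ^ (l - k))) = y ∧ min j k ≤ (i : ℕ)} :=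
        ⟨fun v => hwi v.2.2⟩
      rw [Nat.card_of_isEmpty (α := {v : ZMod (p ^ (l - (i : ℕ))) //
          (ZMod.cast v : ZMod (p ^ (l - k))) = y ∧ min j k ≤ (i : ℕ)}), mul_zero]
  rw [Finset.prod_congr rfl (fun z _ => hfib (reprZ p l k (max j k) z)), Finset.prod_const,
    Finset.card_univ, ZMod.card]
end
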